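/- arXiv:2211.02689 — 6 statements merged into one kernel-verified Lean document; each statement's English description precedes it below -/
import Mathlib

section
/- Let D ⊂ ℂⁿ be a bounded circular domain containing 0. Then the Friedrichs operator F of D, defined by F(g) = B(conj g) where B is the orthogonal projection of L²(D) onto the Bergman space A²(D), has rank one: its range is the one-dimensional space of constant functions. -/
open MeasureTheory Complex ComplexConjugate

noncomputable section

/-- `ℂⁿ` as functions `Fin n → ℂ`. -/
abbrev Cn (n : ℕ) := Fin n → ℂ

/-- A domain is circular if it is invariant under multiplication by unimodular scalars. -/
def IsCircular {n : ℕ} (D : Set (Cn n)) : Prop :=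
  ∀ z ∈ D, ∀ θ : ℝ, Complex.exp (θ * Complex.I) • z ∈ D

/-- A function `f` is `k`-homogeneous on `D` (for `k : ℤ`): `f (λ z) = λ ^ k * f z` for all
`z ∈ D` and all `λ ∈ ℂ` with `|λ|` in the connected component containing `1` of the set
`{r : ℝ | r ≠ 0, r z ∈ D}`. -/
def IsHomog {n : ℕ} (D : Set (Cn n)) (k : ℤ) (f : Cn n → ℂ) : Prop :=
  ∀ z ∈ D, ∀ c : ℂ, c ≠ 0 →
    ‖c‖ ∈ connectedComponentIn {r : ℝ | r ≠ 0 ∧ (r : ℂ) • z ∈ D} 1 →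
    f (c • z) = c ^ k * f z


/-- Membership in the Bergman space `A²(D)`: holomorphic and square-integrable on `D`. -/
def MemA2 {n : ℕ} (D : Set (Cn n)) (f : Cn n → ℂ) : Prop :=
  DifferentiableOn ℂ f D ∧ IntegrableOn (fun z => ‖f z‖ ^ 2) D volume

open Metric Set Real

lemma mp_mul (c : ℂ) (hc : ‖c‖ = 1) :
    MeasurePreserving (fun x : ℂ => c * x) volume volume := by
  have hmem : c ∈ Submonoid.unitSphere ℂ := by
    simpa [Submonoid.unitSphere, mem_sphere_zero_iff_norm] using hc
  have : MeasurePreserving ((rotation (⟨c, hmem⟩ : Circle)) : ℂ → ℂ) volume volume :=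
    LinearIsometryEquiv.measurePreserving _
  exact this

lemma mp_smul {n : ℕ} (c : ℂ) (hc : ‖c‖ = 1) :
    MeasurePreserving (fun z : Cn n => c • z) volume volume :=
  MeasureTheory.volume_preserving_pi (fun _ : Fin n => mp_mul c hc)

lemma abs_exp_unit (θ : ℝ) : ‖Complex.exp (θ * Complex.I)‖ = 1 := by
  simp

lemma rot_rot {n : ℕ} (θ : ℝ) (z : Cn n) :
    Complex.exp (-((θ : ℂ) * Complex.I)) • (Complex.exp (θ * Complex.I) • z) = z := by
  simp [smul_smul, ← Complex.exp_add]

/-- rotation as a measurable equivalence -/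

def rotEquiv {n : ℕ} (θ : ℝ) : Cn n ≃ᵐ Cn n where
  toFun z := Complex.exp (θ * Complex.I) • z
  invFun z := Complex.exp (-((θ : ℂ) * Complex.I)) • z
  left_inv z := rot_rot θ z
  right_inv z := by
    have := rot_rot (n := n) θ (Complex.exp (-((θ : ℂ) * Complex.I)) • z)
    rw [smul_comm] at this
    simpa [smul_smul, ← Complex.exp_add] using this
  measurable_toFun := (continuous_const_smul (Complex.exp (θ * Complex.I))).measurable
  measurable_invFun := (continuous_const_smul (Complex.exp (-((θ : ℂ) * Complex.I)))).measurable

lemma rot_preimage {n : ℕ} {D : Set (Cn n)} (hcirc : IsCircular D) (θ : ℝ) :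
    (fun z : Cn n => Complex.exp (θ * Complex.I) • z) ⁻¹' D = D := by
  ext z
  constructor
  · intro hz
    simp only [mem_preimage] at hz
    simpa [rot_rot θ z] using hcirc _ hz (-θ)
  · intro hz
    exact hcirc _ hz θ

lemma setIntegral_rot {n : ℕ} {E : Type*} [NormedAddCommGroup E] [NormedSpace ℝ E]
    {D : Set (Cn n)} (hcirc : IsCircular D) (θ : ℝ) (f : Cn n → E) :
    ∫ z in D, f (Complex.exp (θ * Complex.I) • z) = ∫ z in D, f z := by
  have h1 := (mp_smul (n := n) (Complex.exp (θ * Complex.I)) (abs_exp_unit θ)).setIntegral_preimage_emb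
    (by exact (rotEquiv (n := n) θ).measurableEmbedding) f D
  simpa [rot_preimage hcirc θ] using h1

lemma integrableOn_rot {n : ℕ} {D : Set (Cn n)} (hcirc : IsCircular D) (θ : ℝ)
    {f : Cn n → ℂ} (hf : IntegrableOn f D volume) :
    IntegrableOn (fun z => f (Complex.exp (θ * Complex.I) • z)) D volume := by
  have := ((mp_smul (n := n) (Complex.exp (θ * Complex.I)) (abs_exp_unit θ)).integrableOn_comp_preimage
    (by exact (rotEquiv (n := n) θ).measurableEmbedding)).2 hf
  simpa [rot_preimage hcirc θ, Function.comp_def] using this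

lemma norm_fderiv_le_of_ball {n : ℕ} {D : Set (Cn n)} (hD : IsOpen D)
    {f : Cn n → ℂ} (hf : DifferentiableOn ℂ f D) {x : Cn n} {r M : ℝ}
    (hr : 0 < r) (hball : closedBall x r ⊆ D) (hM : ∀ w ∈ closedBall x r, ‖f w‖ ≤ M) :
    ‖fderiv ℂ f x‖ ≤ M / r := by
  have hx : x ∈ D := hball (mem_closedBall_self hr.le)
  have hxd : DifferentiableAt ℂ f x := hf.differentiableAt (hD.mem_nhds hx)
  have hM0 : 0 ≤ M := le_trans (norm_nonneg _) (hM x (mem_closedBall_self hr.le))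
  have hMr : 0 ≤ M / r := div_nonneg hM0 hr.le
  refine ContinuousLinearMap.opNorm_le_bound _ hMr (fun v => ?_)
  rcases eq_or_ne v 0 with rfl | hv
  · simp
  -- consider the slice u t = f (x + t • v)
  set u : ℂ → ℂ := fun t => f (x + t • v) with hu
  have hmap : ∀ t : ℂ, ‖t‖ ≤ r / ‖v‖ → x + t • v ∈ closedBall x r := by
    intro t ht
    rw [mem_closedBall, dist_eq_norm]
    have : ‖x + t • v - x‖ = ‖t‖ * ‖v‖ := by
      simp [norm_smul]
    rw [this]
    calc ‖t‖ * ‖v‖ ≤ (r / ‖v‖) * ‖v‖ :=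
          mul_le_mul_of_nonneg_right ht (norm_nonneg v)
      _ = r := div_mul_cancel₀ r (norm_ne_zero_iff.2 hv)
  have hrv : 0 < r / ‖v‖ := div_pos hr (norm_pos_iff.2 hv)
  have hud : DifferentiableOn ℂ u (closedBall (0:ℂ) (r / ‖v‖)) := by
    intro t ht
    have hmem : x + t • v ∈ D := hball (hmap t (by simpa [dist_eq_norm] using ht))
    have h1 : DifferentiableAt ℂ u t := by
      have hlin : DifferentiableAt ℂ (fun t : ℂ => x + t • v) t := by
        apply DifferentiableAt.const_add
        exact (differentiable_id.smul_const v) t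
      exact (hf.differentiableAt (hD.mem_nhds hmem)).comp t hlin
    exact h1.differentiableWithinAt
  have hcl : DiffContOnCl ℂ u (ball (0:ℂ) (r / ‖v‖)) := by
    apply DifferentiableOn.diffContOnCl
    rwa [closure_ball (0:ℂ) hrv.ne']
  have hbd : ∀ t ∈ sphere (0:ℂ) (r / ‖v‖), ‖u t‖ ≤ M := by
    intro t ht
    apply hM
    apply hmap
    simpa [dist_eq_norm] using le_of_eq ht
  have hderiv : ‖deriv u 0‖ ≤ M / (r / ‖v‖) :=
    Complex.norm_deriv_le_of_forall_mem_sphere_norm_le hrv hcl hbd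
  -- deriv u 0 = fderiv f x v
  have hud0 : HasDerivAt u ((fderiv ℂ f x) v) 0 := by
    have hlin : HasDerivAt (fun t : ℂ => x + t • v) v 0 := by
      simpa using ((hasDerivAt_id (0:ℂ)).smul_const v).const_add x
    have hfd : HasFDerivAt f (fderiv ℂ f x) (x + (0:ℂ) • v) := by
      simpa using hxd.hasFDerivAt
    have := hfd.comp_hasDerivAt (0:ℂ) hlin
    exact this
  rw [hud0.deriv] at hderiv
  calc ‖(fderiv ℂ f x) v‖ ≤ M / (r / ‖v‖) := hderiv
    _ = M / r * ‖v‖ := by field_simp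

def c0 {n : ℕ} (f : Cn n → ℂ) (z : Cn n) : ℂ :=
  ∫ θ in Set.Ioc (0:ℝ) (2*π), f (Complex.exp (θ * Complex.I) • z)

lemma c0_differentiableOn {n : ℕ} {D : Set (Cn n)} (hD : IsOpen D)
    (hcirc : IsCircular D) {f : Cn n → ℂ} (hf : DifferentiableOn ℂ f D) :
    DifferentiableOn ℂ (c0 f) D := by
  intro z₀ hz₀
  suffices h : DifferentiableAt ℂ (c0 f) z₀ from h.differentiableWithinAt
  -- choose ε
  obtain ⟨δ, hδ, hball⟩ := Metric.isOpen_iff.1 hD z₀ hz₀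
  set ε : ℝ := δ / 4 with hε
  have hεpos : 0 < ε := by positivity
  have hsub : closedBall z₀ (2*ε) ⊆ D := by
    intro w hw
    apply hball
    rw [mem_ball]
    calc dist w z₀ ≤ 2*ε := hw
      _ < δ := by rw [hε]; linarith
  -- the compact set of rotations
  set K : Set (Cn n) :=
    (fun p : ℝ × Cn n => Complex.exp (p.1 * Complex.I) • p.2) ''
      (Icc 0 (2*π) ×ˢ closedBall z₀ (2*ε)) with hK
  have hKc : IsCompact K := by
    apply IsCompact.image
    · exact (isCompact_Icc).prod (isCompact_closedBall _ _)
    · fun_prop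
  have hKD : K ⊆ D := by
    rintro _ ⟨⟨θ, x⟩, ⟨_, hx⟩, rfl⟩
    exact hcirc _ (hsub hx) θ
  obtain ⟨C, hC⟩ := hKc.exists_bound_of_continuousOn (hf.continuousOn.mono hKD)
  -- key inclusion: for θ ∈ Icc 0 2π and x ∈ ball z₀ ε, closedBall (exp(θI)•x) ε ⊆ K
  have hkey : ∀ θ ∈ Icc (0:ℝ) (2*π), ∀ x ∈ ball z₀ ε,
      closedBall (Complex.exp (θ * Complex.I) • x) ε ⊆ K := by
    intro θ hθ x hx v hv
    refine ⟨⟨θ, Complex.exp ((-θ:ℝ) * Complex.I) • v⟩, ⟨hθ, ?_⟩, ?_⟩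
    · rw [mem_closedBall, dist_eq_norm]
      have h1 : Complex.exp ((-θ:ℝ) * Complex.I) • v - z₀
          = Complex.exp ((-θ:ℝ) * Complex.I) • (v - Complex.exp (θ * Complex.I) • x)
            + (x - z₀) := by
        rw [smul_sub]
        have : Complex.exp ((-θ:ℝ) * Complex.I) • Complex.exp (θ * Complex.I) • x = x := by
          simp [smul_smul, ← Complex.exp_add]
        rw [this]; abel
      rw [h1]
      have h2 : ‖Complex.exp ((-θ:ℝ) * Complex.I) • (v - Complex.exp (θ * Complex.I) • x)‖ ≤ ε := by
        rw [norm_smul]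
        rw [show ‖Complex.exp ((-θ:ℝ) * Complex.I)‖ = 1 by
          simp [Complex.norm_exp]]
        rw [one_mul]
        rw [mem_closedBall, dist_eq_norm] at hv
        exact hv
      calc ‖_ + (x - z₀)‖ ≤ ε + ‖x - z₀‖ := by
            refine le_trans (norm_add_le _ _) (by gcongr)
        _ ≤ ε + ε := by
            have := mem_ball_iff_norm.1 hx
            linarith
        _ = 2*ε := by ring
    · simp [smul_smul, ← Complex.exp_add]
  -- bound constant
  have hz₀K : z₀ ∈ K := by
    refine ⟨⟨0, z₀⟩, ⟨⟨le_refl 0, by positivity⟩, mem_closedBall_self (by positivity)⟩, ?_⟩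
    norm_num
  have hC0 : 0 ≤ C := le_trans (norm_nonneg _) (hC _ hz₀K)
  set μ : Measure ℝ := volume.restrict (Set.Ioc (0:ℝ) (2*π)) with hμ
  set F : Cn n → ℝ → ℂ := fun x θ => f (Complex.exp (θ * Complex.I) • x) with hF
  set F' : Cn n → ℝ → (Cn n →L[ℂ] ℂ) :=
    fun x θ => Complex.exp (θ * Complex.I) • fderiv ℂ f (Complex.exp (θ * Complex.I) • x) with hF'
  have cont_rot : ∀ x ∈ D, Continuous (fun θ : ℝ => f (Complex.exp (θ * Complex.I) • x)) := by
    intro x hx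
    apply hf.continuousOn.comp_continuous (by fun_prop)
    intro θ
    exact hcirc _ hx θ
  have hmain : HasFDerivAt (fun x => ∫ θ, F x θ ∂μ) (∫ θ, F' z₀ θ ∂μ) z₀ := by
    apply hasFDerivAt_integral_of_dominated_of_fderiv_le (𝕜 := ℂ)
      (bound := fun _ => C / ε) (s := ball z₀ ε) (ball_mem_nhds z₀ hεpos)
    · filter_upwards [ball_mem_nhds z₀ hεpos] with x hx
      have hxD : x ∈ D := hsub (by
        simp only [mem_closedBall]
        have := mem_ball.1 hx
        nlinarith)
      exact ((cont_rot x hxD)).aestronglyMeasurable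
    · -- integrability of F z₀
      have : Continuous (F z₀) := cont_rot z₀ hz₀
      rw [hμ]
      exact (this.integrableOn_Ioc)
    · -- measurability of F' z₀
      apply StronglyMeasurable.aestronglyMeasurable
      apply StronglyMeasurable.smul (f := fun θ : ℝ => Complex.exp (θ * Complex.I))
        (g := fun θ : ℝ => fderiv ℂ f (Complex.exp (θ * Complex.I) • z₀))
      · exact (Continuous.stronglyMeasurable (by fun_prop))
      · exact ((measurable_fderiv ℂ f).comp
          (by fun_prop : Measurable fun θ : ℝ => Complex.exp (θ * Complex.I) • z₀)).stronglyMeasurable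
    · -- bound
      rw [hμ]
      rw [ae_restrict_iff' measurableSet_Ioc]
      filter_upwards with θ hθ
      intro x hx
      have hθ' : θ ∈ Icc (0:ℝ) (2*π) := Ioc_subset_Icc_self hθ
      have hKsub := hkey θ hθ' x hx
      have hbd : ‖F' x θ‖ = ‖fderiv ℂ f (Complex.exp (θ * Complex.I) • x)‖ := by
        show ‖Complex.exp (θ * Complex.I) • fderiv ℂ f (Complex.exp (θ * Complex.I) • x)‖ = _
        rw [norm_smul]
        simp [Complex.norm_exp]
      rw [hbd]
      exact norm_fderiv_le_of_ball hD hf hεpos (hKsub.trans hKD) (fun w hw => hC w (hKsub hw))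
    · exact integrable_const _
    · -- differentiability
      filter_upwards with θ
      intro x hx
      have hxD : Complex.exp (θ * Complex.I) • x ∈ D := by
        apply hcirc
        apply hsub
        simp only [mem_closedBall]
        have := mem_ball.1 hx
        nlinarith
      set c : ℂ := Complex.exp (θ * Complex.I)
      have hS : HasFDerivAt (fun x : Cn n => c • x)
          (c • ContinuousLinearMap.id ℂ (Cn n)) x := by
        have := (c • ContinuousLinearMap.id ℂ (Cn n)).hasFDerivAt (x := x)
        simpa using this
      have hfd : HasFDerivAt f (fderiv ℂ f (c • x)) (c • x) :=
        (hf.differentiableAt (hD.mem_nhds hxD)).hasFDerivAt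
      have := hfd.comp x hS
      convert this using 1
      · rfl
      ext v
      show (c • fderiv ℂ f (c • x)) v = _
      simp only [ContinuousLinearMap.smul_apply, ContinuousLinearMap.coe_comp', Function.comp_apply,
        ContinuousLinearMap.coe_smul', Pi.smul_apply, ContinuousLinearMap.coe_id', id_eq]
      rw [(fderiv ℂ f (c • x)).map_smul]
  exact ⟨_, hmain⟩

lemma c0_near_zero {n : ℕ} {D : Set (Cn n)} (hD : IsOpen D) (h0 : (0 : Cn n) ∈ D)
    {f : Cn n → ℂ} (hf : DifferentiableOn ℂ f D) :
    ∀ᶠ z in nhds (0 : Cn n), c0 f z = (2*π : ℝ) • f 0 := by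
  obtain ⟨r, hr, hball⟩ := Metric.isOpen_iff.1 hD 0 h0
  filter_upwards [Metric.ball_mem_nhds (0 : Cn n) (by positivity : (0:ℝ) < r/2)] with z hz
  have hz' : ‖z‖ < r / 2 := by simpa [dist_eq_norm] using hz
  set u : ℂ → ℂ := fun w => f (w • z) with hu
  have hmem : ∀ w : ℂ, ‖w‖ < 3/2 → w • z ∈ D := by
    intro w hw
    apply hball
    rw [mem_ball, dist_eq_norm, sub_zero, norm_smul]
    calc ‖w‖ * ‖z‖ ≤ (3/2) * ‖z‖ := by
          apply mul_le_mul_of_nonneg_right (le_of_lt ?_) (norm_nonneg z)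
          simpa using hw
      _ < r := by nlinarith [norm_nonneg z]
  have hud : DifferentiableOn ℂ u (ball (0:ℂ) (3/2)) := by
    intro w hw
    have hwD : w • z ∈ D := hmem w (by simpa [dist_eq_norm] using hw)
    apply DifferentiableAt.differentiableWithinAt
    exact (hf.differentiableAt (hD.mem_nhds hwD)).comp w ((differentiable_id.smul_const z) w)
  have hcl : DiffContOnCl ℂ u (ball (0:ℂ) 1) := by
    apply DifferentiableOn.diffContOnCl
    rw [closure_ball (0:ℂ) one_ne_zero]
    exact hud.mono (fun w hw => by
      rw [mem_closedBall] at hw; rw [mem_ball]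
      calc dist w 0 ≤ 1 := hw
        _ < 3/2 := by norm_num)
  have hcau := hcl.circleIntegral_sub_inv_smul (w := 0) (by simp)
  have hint : ∀ θ : ℝ, deriv (circleMap 0 1) θ • ((circleMap 0 1 θ - 0)⁻¹ • u (circleMap 0 1 θ))
      = Complex.I * f (Complex.exp (θ * Complex.I) • z) := by
    intro θ
    rw [deriv_circleMap]
    simp only [circleMap, smul_eq_mul, sub_zero]
    have hne : Complex.exp (θ * Complex.I) ≠ 0 := Complex.exp_ne_zero _
    field_simp [hu]
    ring_nf
    simp [hu]
  rw [circleIntegral] at hcau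
  simp only [hint] at hcau
  rw [intervalIntegral.integral_const_mul] at hcau
  have h2 : u 0 = f 0 := by simp [hu]
  rw [h2] at hcau
  have hioc : ∫ θ in (0:ℝ)..(2*π), f (Complex.exp (θ * Complex.I) • z)
      = c0 f z := by
    rw [intervalIntegral.integral_of_le (by positivity)]
    rfl
  rw [hioc] at hcau
  have hI : (Complex.I : ℂ) ≠ 0 := Complex.I_ne_zero
  have : Complex.I * c0 f z = Complex.I * ((2*π : ℝ) • f 0) := by
    rw [hcau]
    simp [smul_eq_mul]
    ring
  exact mul_left_cancel₀ hI this

lemma eqOn_const_of_eventually {n : ℕ} {D : Set (Cn n)} (hD : IsOpen D)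
    (hconn : IsPreconnected D) {u : Cn n → ℂ} (hu : DifferentiableOn ℂ u D)
    {z₀ : Cn n} (hz₀ : z₀ ∈ D) {a : ℂ} (hloc : ∀ᶠ z in nhds z₀, u z = a) :
    ∀ z ∈ D, u z = a := by
  set A : Set (Cn n) := {z | ∀ᶠ w in nhds z, u w = a} with hA
  have hAopen : IsOpen A := isOpen_setOf_eventually_nhds
  -- key step: if a ball around y is inside D and y ∈ A, then u = a on the ball
  have hball : ∀ (y : Cn n) (s : ℝ), 0 < s → ball y s ⊆ D → y ∈ A →
      ∀ w ∈ ball y s, u w = a := by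
    intro y s hs hsub hy w hw
    rcases eq_or_ne w y with rfl | hne
    · exact hloc.self_of_nhds ▸ (hy.self_of_nhds)
    have hvy : (0:ℝ) < ‖w - y‖ := by
      rw [norm_pos_iff]; exact sub_ne_zero.2 hne
    set ρ : ℝ := s / ‖w - y‖ with hρ
    have hρ1 : 1 < ρ := by
      rw [hρ, lt_div_iff₀ hvy, one_mul]
      simpa [dist_eq_norm] using hw
    set v : ℂ → ℂ := fun t => u (y + t • (w - y)) with hv
    have hmap : ∀ t : ℂ, ‖t‖ < ρ → y + t • (w - y) ∈ ball y s := by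
      intro t ht
      rw [mem_ball, dist_eq_norm]
      have : y + t • (w - y) - y = t • (w - y) := by abel
      rw [this, norm_smul]
      calc ‖t‖ * ‖w - y‖ < ρ * ‖w - y‖ := by
            exact mul_lt_mul_of_pos_right ht hvy
        _ = s := by rw [hρ]; field_simp
    have hvd : DifferentiableOn ℂ v (ball (0:ℂ) ρ) := by
      intro t ht
      have htD : y + t • (w - y) ∈ D :=
        hsub (hmap t (by simpa [dist_eq_norm] using ht))
      apply DifferentiableAt.differentiableWithinAt
      have hlin : DifferentiableAt ℂ (fun t : ℂ => y + t • (w - y)) t :=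
        (differentiableAt_const _).add ((differentiable_id.smul_const _) t)
      exact DifferentiableAt.comp t (hu.differentiableAt (hD.mem_nhds htD)) hlin
    have hva : AnalyticOnNhd ℂ v (ball (0:ℂ) ρ) :=
      hvd.analyticOnNhd isOpen_ball
    have hconst : AnalyticOnNhd ℂ (fun _ : ℂ => a) (ball (0:ℂ) ρ) :=
      analyticOnNhd_const
    have h0mem : (0:ℂ) ∈ ball (0:ℂ) ρ := by
      rw [mem_ball, dist_self]; linarith
    have hev : v =ᶠ[nhds (0:ℂ)] (fun _ => a) := by
      have hcont : Continuous (fun t : ℂ => y + t • (w - y)) := by fun_prop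
      have hy' : {w_1 | u w_1 = a} ∈ nhds ((fun t : ℂ => y + t • (w - y)) 0) := by
        simpa using (show {w_1 | u w_1 = a} ∈ nhds y from hy)
      have hpull := hcont.continuousAt (x := (0:ℂ)).preimage_mem_nhds hy' 
      filter_upwards [hpull] with t ht
      exact ht
    have heq := hva.eqOn_of_preconnected_of_eventuallyEq hconst
      (convex_ball (0:ℂ) ρ).isPreconnected h0mem hev
    have h1mem : (1:ℂ) ∈ ball (0:ℂ) ρ := by
      rw [mem_ball, dist_zero_right]; simpa using hρ1
    have := heq h1mem
    simpa [hv] using this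
  -- closure step
  have hclosure : closure A ∩ D ⊆ A := by
    rintro z ⟨hzc, hzD⟩
    obtain ⟨r, hr, hsub⟩ := Metric.isOpen_iff.1 hD z hzD
    obtain ⟨y, hyA, hyz⟩ := Metric.mem_closure_iff.1 hzc (r/2) (by positivity)
    rw [dist_comm] at hyz
    have hysub : ball y (r/2) ⊆ D := by
      intro p hp
      apply hsub
      rw [mem_ball] at hp ⊢
      calc dist p z ≤ dist p y + dist y z := dist_triangle _ _ _
        _ < r/2 + r/2 := add_lt_add hp hyz
        _ = r := by ring
    have hzball : z ∈ ball y (r/2) := by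
      rw [mem_ball, dist_comm]
      exact hyz
    have : ∀ w ∈ ball y (r/2), u w = a := hball y (r/2) (by positivity) hysub hyA
    exact Filter.eventually_of_mem (isOpen_ball.mem_nhds hzball) this
  have hDA : D ⊆ A := by
    apply hconn.subset_of_closure_inter_subset hAopen ⟨z₀, hz₀, hloc⟩
    intro z hz
    exact hclosure ⟨hz.1, hz.2⟩
  intro z hz
  exact (hDA hz).self_of_nhds

lemma key_integral {n : ℕ} {D : Set (Cn n)} (hD : IsOpen D) (hDconn : IsPreconnected D)
    (hcirc : IsCircular D) (h0 : (0 : Cn n) ∈ D)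
    {f : Cn n → ℂ} (hf : DifferentiableOn ℂ f D) (hfi : IntegrableOn f D volume) :
    ∫ z in D, f z = (volume D).toReal • f 0 := by
  have hc0 : ∀ z ∈ D, c0 f z = (2*π : ℝ) • f 0 :=
    eqOn_const_of_eventually hD hDconn (c0_differentiableOn hD hcirc hf) h0
      (c0_near_zero hD h0 hf)
  set μ : Measure ℝ := volume.restrict (Set.Ioc (0:ℝ) (2*π)) with hμ
  set ν : Measure (Cn n) := volume.restrict D with hν
  set G : ℝ × Cn n → ℂ := fun p => f (Complex.exp (p.1 * Complex.I) • p.2) with hG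
  have hGm : AEStronglyMeasurable G (μ.prod ν) := by
    rw [hμ, hν, Measure.prod_restrict]
    apply ContinuousOn.aestronglyMeasurable
    · apply hf.continuousOn.comp (by fun_prop : Continuous fun p : ℝ × Cn n =>
        Complex.exp (p.1 * Complex.I) • p.2).continuousOn
      rintro ⟨θ, z⟩ ⟨_, hz⟩
      exact hcirc _ hz θ
    · exact measurableSet_Ioc.prod hD.measurableSet
  have hGint : Integrable G (μ.prod ν) := by
    rw [integrable_prod_iff hGm]
    constructor
    · apply Filter.Eventually.of_forall
      intro θ
      exact integrableOn_rot hcirc θ hfi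
    · have hnorm : ∀ θ : ℝ, (∫ z, ‖G (θ, z)‖ ∂ν) = ∫ z in D, ‖f z‖ := by
        intro θ
        exact setIntegral_rot hcirc θ (fun z => ‖f z‖)
      simp only [hnorm]
      exact integrable_const _
  have hswap := MeasureTheory.integral_integral_swap (f := fun θ z => G (θ, z)) hGint
  -- LHS of swap: ∫ θ, ∫ z in D, f (rot z) = ∫ θ, ∫ z in D, f z
  have hLHS : (∫ θ, (∫ z, G (θ, z) ∂ν) ∂μ) = (2*π) • ∫ z in D, f z := by
    have : ∀ θ : ℝ, (∫ z, G (θ, z) ∂ν) = ∫ z in D, f z := by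
      intro θ
      exact setIntegral_rot hcirc θ f
    simp only [this]
    rw [integral_const]
    congr 1
    simp [hμ, Real.volume_Ioc]
    positivity
  have hRHS : (∫ z, (∫ θ, G (θ, z) ∂μ) ∂ν) = (volume D).toReal • ((2*π : ℝ) • f 0) := by
    have h1 : (∫ z, (∫ θ, G (θ, z) ∂μ) ∂ν) = ∫ z in D, c0 f z := rfl
    rw [h1]
    rw [setIntegral_congr_fun hD.measurableSet (fun z hz => hc0 z hz)]
    rw [integral_const]
    rw [measureReal_restrict_apply_univ]
    rfl
  rw [hLHS, hRHS] at hswap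
  have h2π : (2*π : ℝ) ≠ 0 := by positivity
  have := hswap
  rw [smul_comm] at this
  exact smul_right_injective ℂ h2π this

/-- The Friedrichs operator of a bounded circular domain containing `0` has rank one:
if `g ∈ A²(D)` and `h ∈ A²(D)` is the Bergman projection of `conj g`, i.e. `conj g - h` is
orthogonal in `L²(D)` to every element of `A²(D)`, then `h` is constant on `D`. -/
theorem stmt2 {n : ℕ} (D : Set (Cn n)) (hD : IsOpen D) (hDconn : IsConnected D)
    (hbdd : Bornology.IsBounded D) (hcirc : IsCircular D) (h0 : 0 ∈ D)
    (g h : Cn n → ℂ) (hg : MemA2 D g) (hh : MemA2 D h)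
    (hproj : ∀ φ : Cn n → ℂ, MemA2 D φ →
      ∫ z in D, (conj (g z) - h z) * conj (φ z) = 0) :
    ∃ c : ℂ, ∀ z ∈ D, h z = c := by
  have hDm : MeasurableSet D := hD.measurableSet
  have hvfin : volume D ≠ ⊤ := hbdd.measure_lt_top.ne
  have hvpos : 0 < volume D := hD.measure_pos volume ⟨0, h0⟩
  set V : ℝ := (volume D).toReal with hV
  have hVpos : 0 < V := ENNReal.toReal_pos hvpos.ne' hvfin
  haveI : IsFiniteMeasure (volume.restrict D) :=
    ⟨by rw [Measure.restrict_apply_univ]; exact hvfin.lt_top⟩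
  have hgc : ContinuousOn g D := hg.1.continuousOn
  have hhc : ContinuousOn h D := hh.1.continuousOn
  -- integrability from square-integrability
  have intOn : ∀ f : Cn n → ℂ, ContinuousOn f D → IntegrableOn (fun z => ‖f z‖ ^ 2) D volume →
      IntegrableOn f D volume := by
    intro f hfc hfi2
    apply Integrable.mono' (((integrable_const (1:ℝ)).add hfi2).div_const 2)
      (hfc.aestronglyMeasurable hDm)
    filter_upwards with z
    simp only [Pi.add_apply, Pi.div_apply]
    nlinarith [sq_nonneg (‖f z‖ - 1), norm_nonneg (f z)]
  have intMul : ∀ f k : Cn n → ℂ, ContinuousOn f D → ContinuousOn k D →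
      IntegrableOn (fun z => ‖f z‖ ^ 2) D volume → IntegrableOn (fun z => ‖k z‖ ^ 2) D volume →
      IntegrableOn (fun z => f z * k z) D volume := by
    intro f k hfc hkc hfi2 hki2
    apply Integrable.mono' ((hfi2.add hki2).div_const 2)
      ((hfc.mul hkc).aestronglyMeasurable hDm)
    filter_upwards with z
    simp only [Pi.add_apply, Pi.div_apply, Pi.mul_apply, norm_mul]
    nlinarith [sq_nonneg (‖f z‖ - ‖k z‖), norm_nonneg (f z), norm_nonneg (k z)]
  have hconjc : ContinuousOn (fun z => conj (h z)) D :=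
    (continuous_conj.comp_continuousOn hhc)
  have hint_g : IntegrableOn g D volume := intOn g hgc hg.2
  have hint_h : IntegrableOn h D volume := intOn h hhc hh.2
  have hint_conjg : IntegrableOn (fun z => conj (g z)) D volume := by
    apply Integrable.mono' hint_g.norm
      ((continuous_conj.comp_continuousOn hgc).aestronglyMeasurable hDm)
    filter_upwards with z
    simp
  have hint_conjh : IntegrableOn (fun z => conj (h z)) D volume := by
    apply Integrable.mono' hint_h.norm (hconjc.aestronglyMeasurable hDm)
    filter_upwards with z
    simp
  have hint_gh : IntegrableOn (fun z => g z * h z) D volume := intMul g h hgc hhc hg.2 hh.2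
  have hint_hconjh : IntegrableOn (fun z => h z * conj (h z)) D volume := by
    apply Integrable.mono' hh.2 ((hhc.mul hconjc).aestronglyMeasurable hDm)
    filter_upwards with z
    simp [norm_mul]
    nlinarith [norm_nonneg (h z)]
  have hint_conj_gh : IntegrableOn (fun z => conj (g z) * conj (h z)) D volume := by
    apply Integrable.mono' hint_gh.norm
      (((continuous_conj.comp_continuousOn hgc).mul hconjc).aestronglyMeasurable hDm)
    filter_upwards with z
    apply le_of_eq
    simp [norm_mul]
  set c : ℂ := conj (g 0) with hc
  -- step 1 : ∫ h = V • c
  have mem1 : MemA2 D (fun _ => (1:ℂ)) := by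
    refine ⟨differentiableOn_const _, ?_⟩
    have : IntegrableOn (fun _ : Cn n => (1:ℝ)) D volume :=
      integrableOn_const hvfin
    simpa using this
  have e1 := hproj _ mem1
  simp only [map_one, mul_one] at e1
  have e1' : (∫ z in D, conj (g z)) = ∫ z in D, h z := by
    have := integral_sub hint_conjg hint_h
    rw [e1] at this
    linear_combination -this
  have hg_int : (∫ z in D, g z) = V • g 0 :=
    key_integral hD hDconn.isPreconnected hcirc h0 hg.1 hint_g
  have hh_int : (∫ z in D, h z) = V • h 0 :=
    key_integral hD hDconn.isPreconnected hcirc h0 hh.1 hint_h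
  have hconjg_int : (∫ z in D, conj (g z)) = (V:ℂ) * c := by
    rw [integral_conj, hg_int]
    simp [hc, Complex.real_smul]
  have hsum_h : (∫ z in D, h z) = (V:ℂ) * c := by rw [← e1', hconjg_int]
  -- step 2 : h 0 = c
  have hh0 : h 0 = c := by
    have : (V:ℂ) * h 0 = (V:ℂ) * c := by
      rw [← hsum_h, hh_int, Complex.real_smul]
    have hVne : (V:ℂ) ≠ 0 := by
      simp only [ne_eq, Complex.ofReal_eq_zero]
      exact hVpos.ne'
    exact mul_left_cancel₀ hVne this
  -- step 3 : ∫ h * conj h = V * (c * conj c)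
  have e2 := hproj h hh
  have e2' : (∫ z in D, conj (g z) * conj (h z)) = ∫ z in D, h z * conj (h z) := by
    have hsplit : (∫ z in D, (conj (g z) - h z) * conj (h z))
        = (∫ z in D, conj (g z) * conj (h z)) - ∫ z in D, h z * conj (h z) := by
      rw [← integral_sub hint_conj_gh hint_hconjh]
      congr 1
      funext z
      ring
    rw [e2] at hsplit
    linear_combination -hsplit
  have hgh_int : (∫ z in D, g z * h z) = V • (g 0 * h 0) :=
    key_integral hD hDconn.isPreconnected hcirc h0 (hg.1.mul hh.1) hint_gh
  have hhconjh : (∫ z in D, h z * conj (h z)) = (V:ℂ) * (c * conj c) := by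
    rw [← e2']
    have : (∫ z in D, conj (g z) * conj (h z)) = conj (∫ z in D, g z * h z) := by
      rw [← integral_conj]
      congr 1
      funext z
      simp
    rw [this, hgh_int, hh0]
    simp only [Complex.real_smul, map_mul, Complex.conj_ofReal, hc, Complex.conj_conj]
  -- step 4 : ∫ ‖h - c‖² = 0
  have hconjh_int : (∫ z in D, conj (h z)) = (V:ℂ) * conj c := by
    rw [integral_conj, hsum_h]
    simp
  have hint_hc : IntegrableOn (fun z => h z * conj c) D volume := hint_h.mul_const _
  have hint_ch : IntegrableOn (fun z => c * conj (h z)) D volume := hint_conjh.const_mul _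
  have hint_cc : IntegrableOn (fun _ : Cn n => c * conj c) D volume :=
    integrableOn_const hvfin
  have i1 : IntegrableOn (fun z => h z * conj (h z) - h z * conj c) D volume :=
    hint_hconjh.sub hint_hc
  have i2 : IntegrableOn (fun z => (h z * conj (h z) - h z * conj c) - c * conj (h z)) D volume :=
    i1.sub hint_ch
  have hexp : (∫ z in D, (h z - c) * conj (h z - c))
      = (∫ z in D, h z * conj (h z)) - (∫ z in D, h z * conj c)
        - (∫ z in D, c * conj (h z)) + (∫ z in D, c * conj c) := by
    rw [← integral_sub hint_hconjh hint_hc, ← integral_sub i1 hint_ch,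
      ← integral_add i2 hint_cc]
    congr 1
    funext z
    simp only [map_sub]
    ring
  have hJ : (∫ z in D, (h z - c) * conj (h z - c)) = 0 := by
    rw [hexp]
    have h1 : (∫ z in D, h z * conj c) = (V:ℂ) * c * conj c := by
      rw [integral_mul_const, hsum_h]
    have h2 : (∫ z in D, c * conj (h z)) = c * ((V:ℂ) * conj c) := by
      rw [integral_const_mul, hconjh_int]
    have h3 : (∫ z in D, c * conj c) = (V:ℂ) * (c * conj c) := by
      rw [setIntegral_const, Complex.real_smul]
      rfl
    rw [hhconjh, h1, h2, h3]
    ring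
  -- turn it into a real statement
  have hint_sq : IntegrableOn (fun z => ‖h z - c‖ ^ 2) D volume := by
    have hconst : IntegrableOn (fun _ : Cn n => ‖c‖ ^ 2) D volume :=
      integrableOn_const hvfin
    have hb : IntegrableOn (fun z => 2 * (‖h z‖ ^ 2 + ‖c‖ ^ 2)) D volume :=
      (hh.2.add hconst).const_mul 2
    apply Integrable.mono' hb
      (((hhc.sub continuousOn_const).norm.pow 2).aestronglyMeasurable hDm)
    filter_upwards with z
    simp only [Pi.pow_apply, Pi.sub_apply, norm_pow, norm_norm]
    nlinarith [norm_sub_le (h z) c, norm_nonneg (h z - c), norm_nonneg (h z), norm_nonneg c,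
      sq_nonneg (‖h z‖ - ‖c‖)]
  have hreal : (∫ z in D, ‖h z - c‖ ^ 2) = 0 := by
    have hcast : ∀ z : Cn n, (h z - c) * conj (h z - c) = ((‖h z - c‖ ^ 2 : ℝ) : ℂ) := by
      intro z
      rw [Complex.mul_conj]
      norm_cast
      simp [Complex.normSq_eq_norm_sq]
    have hJ2 : (∫ z in D, ((‖h z - c‖ ^ 2 : ℝ) : ℂ)) = 0 := by
      rw [← hJ]
      congr 1
      funext z
      exact (hcast z).symm
    have hcomm : (∫ z in D, ((‖h z - c‖ ^ 2 : ℝ) : ℂ))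
        = ((∫ z in D, ‖h z - c‖ ^ 2 : ℝ) : ℂ) := by
      have := ContinuousLinearMap.integral_comp_comm Complex.ofRealCLM hint_sq
      simpa [Complex.ofRealCLM_apply] using this
    rw [hcomm] at hJ2
    exact_mod_cast hJ2
  have hae : (fun z => ‖h z - c‖ ^ 2) =ᵐ[volume.restrict D] 0 := by
    rw [← integral_eq_zero_iff_of_nonneg (fun z => by positivity) hint_sq]
    exact hreal
  -- conclude pointwise by continuity
  refine ⟨c, fun z₁ hz₁ => ?_⟩
  by_contra hne
  have hcont : ContinuousAt h z₁ := hhc.continuousAt (hD.mem_nhds hz₁)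
  have hev : ∀ᶠ z in nhds z₁, h z ≠ c ∧ z ∈ D := by
    filter_upwards [hcont.eventually_ne hne, hD.mem_nhds hz₁] with z h1 h2
    exact ⟨h1, h2⟩
  obtain ⟨ε, hε, hball⟩ := Metric.eventually_nhds_iff_ball.1 hev
  have hnull : volume ({z | ‖h z - c‖ ^ 2 ≠ 0} ∩ D) = 0 := by
    have h2 := ae_iff.1 hae
    simp only [Pi.zero_apply] at h2
    rw [Measure.restrict_apply' hDm] at h2
    exact h2
  have hsubset : ball z₁ ε ⊆ {z | ‖h z - c‖ ^ 2 ≠ 0} ∩ D := by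
    intro z hz
    obtain ⟨h1, h2⟩ := hball z hz
    refine ⟨?_, h2⟩
    simp only [mem_setOf_eq]
    intro hcontra
    apply h1
    have : ‖h z - c‖ = 0 := by nlinarith [norm_nonneg (h z - c)]
    rwa [norm_eq_zero, sub_eq_zero] at this
  have hpos : 0 < volume (ball z₁ ε) := Metric.measure_ball_pos volume z₁ hε
  have : volume (ball z₁ ε) ≤ 0 := hnull ▸ measure_mono hsubset
  exact absurd (le_antisymm this hpos.le) hpos.ne'
end
end

section
/- Let φ : D₁ → D₂ be a proper holomorphic map of finite multiplicity m between bounded domains in ℂⁿ. Then for every f ∈ A²(D₂), the function f ∘ φ belongs to the weighted Bergman space A²(D₁, |Jφ|²), and m·∫_{D₂} |f|² dV = ∫_{D₁} |f ∘ φ|² |Jφ|² dV; hence the map Γ(f) = (1/√m)(f ∘ φ) is an isometric embedding of A²(D₂) into A²(D₁, |Jφ|²). -/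
open MeasureTheory Complex ComplexConjugate

noncomputable section

/-- Membership in the weighted Bergman space `A²(D, ν)`. -/
def MemA2w {n : ℕ} (D : Set (Cn n)) (ν : Cn n → ℝ) (f : Cn n → ℂ) : Prop :=
  DifferentiableOn ℂ f D ∧ IntegrableOn (fun z => ‖f z‖ ^ 2 * ν z) D volume

/-- The complex Jacobian determinant of a map `ℂⁿ → ℂⁿ`. -/
def Jac {n : ℕ} (φ : Cn n → Cn n) (z : Cn n) : ℂ := (fderiv ℂ φ z).det

/-- `φ : D₁ → D₂` is a proper holomorphic map of (finite) multiplicity `m`: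
holomorphic, surjective onto `D₂`, proper (preimages of compacts are compact), and there is a
set `Z` of measure zero off which every fiber has exactly `m` points. -/
structure ProperHoloMult {n : ℕ} (D₁ D₂ : Set (Cn n)) (φ : Cn n → Cn n) (m : ℕ) : Prop where
  holo : DifferentiableOn ℂ φ D₁
  surj : φ '' D₁ = D₂
  proper : ∀ K ⊆ D₂, IsCompact K → IsCompact (D₁ ∩ φ ⁻¹' K)
  mult : ∃ Z : Set (Cn n), Z ⊆ D₂ ∧ volume Z = 0 ∧
    ∀ w ∈ D₂ \ Z, (D₁ ∩ φ ⁻¹' {w}).ncard = m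


open Set
open scoped NNReal ENNReal

section AuxDet
open Matrix
variable {ι : Type*} [Fintype ι] [DecidableEq ι]

lemma det_blocks_complex (A B : Matrix ι ι ℂ) :
    (fromBlocks A (-B) B A).det = (A - Complex.I • B).det * (A + Complex.I • B).det := by
  classical
  set P : Matrix (ι ⊕ ι) (ι ⊕ ι) ℂ := fromBlocks 1 1 (Complex.I • 1) (-(Complex.I • 1)) with hP
  have hPdet : P.det = (-(2*Complex.I)) ^ (Fintype.card ι) := by
    rw [hP, Matrix.det_fromBlocks_one₁₁]
    have : -(Complex.I • 1) - Complex.I • 1 * 1 = (-(2*Complex.I)) • (1 : Matrix ι ι ℂ) := by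
      ext i j
      by_cases h : i = j <;> simp [Matrix.smul_apply, Matrix.one_apply, h] <;> ring
    rw [this, Matrix.det_smul, Matrix.det_one, mul_one]
  have hPne : P.det ≠ 0 := by
    rw [hPdet]
    exact pow_ne_zero _ (by simp [Complex.ext_iff])
  have key : fromBlocks A (-B) B A * P
      = P * fromBlocks (A - Complex.I • B) 0 0 (A + Complex.I • B) := by
    rw [hP, Matrix.fromBlocks_multiply, Matrix.fromBlocks_multiply]
    refine Matrix.fromBlocks_inj.mpr ⟨?_, ?_, ?_, ?_⟩ <;>
      · simp only [Matrix.mul_one, Matrix.one_mul, Matrix.mul_smul, Matrix.smul_mul,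
          Matrix.mul_zero, Matrix.zero_mul, Matrix.neg_mul, Matrix.mul_neg, neg_zero,
          add_zero, zero_add, smul_sub, smul_add, smul_smul, Complex.I_mul_I,
          neg_one_smul, one_smul, sub_neg_eq_add, neg_add, neg_neg, sub_eq_add_neg, neg_smul]
        match_scalars <;> simp [Complex.I_sq] <;> ring
  have h2 := congrArg Matrix.det key
  rw [Matrix.det_mul, Matrix.det_mul, Matrix.det_fromBlocks_zero₂₁, mul_comm P.det _] at h2
  exact mul_right_cancel₀ hPne h2

lemma det_restrictScalars_complex {n : ℕ} (L : (Fin n → ℂ) →ₗ[ℂ] (Fin n → ℂ)) :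
    LinearMap.det (L.restrictScalars ℝ) = Complex.normSq (LinearMap.det L) := by
  classical
  set b : Module.Basis (Fin n) ℂ (Fin n → ℂ) := Pi.basisFun ℂ (Fin n) with hb
  set M : Matrix (Fin n) (Fin n) ℂ := LinearMap.toMatrix b b L with hM
  let e : Fin 2 × Fin n ≃ Fin n ⊕ Fin n :=
    { toFun := fun p => if p.1 = 0 then Sum.inl p.2 else Sum.inr p.2
      invFun := fun s => Sum.elim (fun k => ((0 : Fin 2), k)) (fun k => ((1 : Fin 2), k)) s
      left_inv := by
        rintro ⟨i, k⟩
        fin_cases i <;> simp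
      right_inv := by
        rintro (k | k) <;> simp }
  set C : Module.Basis (Fin 2 × Fin n) ℝ (Fin n → ℂ) := Complex.basisOneI.smulTower b with hC
  have hdet : LinearMap.det (L.restrictScalars ℝ)
      = (Matrix.reindex e e (LinearMap.toMatrix C C (L.restrictScalars ℝ))).det := by
    rw [Matrix.det_reindex_self, LinearMap.det_toMatrix]
  have hBmat : Matrix.reindex e e (LinearMap.toMatrix C C (L.restrictScalars ℝ))
      = Matrix.fromBlocks (M.map Complex.re) (M.map (fun z => -z.im))
          (M.map Complex.im) (M.map Complex.re) := by
    ext i j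
    have hL : ∀ (c : ℂ) (l : Fin n) (k : Fin n),
        (b.repr ((L.restrictScalars ℝ) (c • b l))) k = c * M k l := by
      intro c l k
      simp [hM, LinearMap.toMatrix_apply, Pi.basisFun_repr, LinearMap.restrictScalars_apply,
        _root_.map_smul]
    have hsyml : ∀ k : Fin n, e.symm (Sum.inl k) = ((0 : Fin 2), k) := fun _ => rfl
    have hsymr : ∀ k : Fin n, e.symm (Sum.inr k) = ((1 : Fin 2), k) := fun _ => rfl
    rcases i with k | k <;> rcases j with l | l <;>
      simp only [Matrix.reindex_apply, Matrix.submatrix_apply, Matrix.fromBlocks,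
        Matrix.of_apply, Sum.elim_inl, Sum.elim_inr, hsyml, hsymr,
        LinearMap.toMatrix_apply, hC, Module.Basis.smulTower_repr, Module.Basis.smulTower_apply,
        Complex.coe_basisOneI, Matrix.map_apply, Matrix.cons_val_zero, Matrix.cons_val_one,
        Matrix.head_cons]
    · rw [hL 1 l k]
      simp [Complex.coe_basisOneI_repr]
    · rw [hL Complex.I l k]
      simp [Complex.coe_basisOneI_repr]
    · rw [hL 1 l k]
      simp [Complex.coe_basisOneI_repr]
    · rw [hL Complex.I l k]
      simp [Complex.coe_basisOneI_repr]
  rw [hdet, hBmat, ← LinearMap.det_toMatrix b L, ← hM]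
  -- now push to ℂ
  have h2 : ((Matrix.fromBlocks (M.map Complex.re) (M.map (fun z => -z.im))
      (M.map Complex.im) (M.map Complex.re)).det : ℂ)
      = ((M.map Complex.re).map Complex.ofReal - Complex.I • (M.map Complex.im).map Complex.ofReal).det
        * ((M.map Complex.re).map Complex.ofReal + Complex.I • (M.map Complex.im).map Complex.ofReal).det := by
    rw [show ((Matrix.fromBlocks (M.map Complex.re) (M.map (fun z => -z.im))
      (M.map Complex.im) (M.map Complex.re)).det : ℂ)
      = (Complex.ofRealHom : ℝ →+* ℂ) _ from rfl, RingHom.map_det]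
    rw [← det_blocks_complex]
    congr 1
    ext i j
    rcases i with k | k <;> rcases j with l | l <;>
      simp [Matrix.fromBlocks, RingHom.mapMatrix_apply, Matrix.map_apply]
  have hA : (M.map Complex.re).map Complex.ofReal + Complex.I • (M.map Complex.im).map Complex.ofReal = M := by
    ext i j
    simp [Matrix.map_apply, Matrix.smul_apply, Complex.ext_iff]
  have hAc : (M.map Complex.re).map Complex.ofReal - Complex.I • (M.map Complex.im).map Complex.ofReal
      = M.map (starRingEnd ℂ) := by
    ext i j
    simp [Matrix.map_apply, Matrix.smul_apply, Complex.ext_iff]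
  rw [hA, hAc] at h2
  have h3 : (M.map (starRingEnd ℂ)).det = (starRingEnd ℂ) M.det := by
    rw [show M.map (starRingEnd ℂ) = (starRingEnd ℂ).mapMatrix M from rfl, ← RingHom.map_det]
  rw [h3] at h2
  apply Complex.ofReal_injective
  rw [h2, mul_comm, Complex.mul_conj]

end AuxDet

section AuxInj
variable {E : Type*} [NormedAddCommGroup E] [NormedSpace ℝ E] [FiniteDimensional ℝ E]

lemma exists_inj_threshold :
    ∃ r : (E →L[ℝ] E) → ℝ≥0, (∀ A, r A ≠ 0) ∧
      ∀ (A : E →L[ℝ] E), A.det ≠ 0 → ∀ (φ : E → E) (s : Set E),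
        ApproximatesLinearOn φ A s (r A) → Set.InjOn φ s := by
  classical
  have hconv : ∀ (A : E →L[ℝ] E), A.det ≠ 0 → ∃ B : E ≃L[ℝ] E, (B : E →L[ℝ] E) = A := by
    intro A hA
    refine ⟨(LinearMap.equivOfDetNeZero (A : E →ₗ[ℝ] E) hA).toContinuousLinearEquiv, ?_⟩
    ext x
    simp [LinearEquiv.coe_toContinuousLinearEquiv', LinearMap.equivOfDetNeZero,
      LinearEquiv.coe_ofIsUnitDet]
  set r : (E →L[ℝ] E) → ℝ≥0 := fun A =>
    if h : A.det ≠ 0 ∧ Nontrivial E then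
      (‖(((hconv A h.1).choose.symm : E ≃L[ℝ] E) : E →L[ℝ] E)‖₊)⁻¹ / 2
    else 1 with hr
  have hpos : ∀ (A : E →L[ℝ] E) (h : A.det ≠ 0 ∧ Nontrivial E),
      (0 : ℝ≥0) < (‖(((hconv A h.1).choose.symm : E ≃L[ℝ] E) : E →L[ℝ] E)‖₊)⁻¹ := by
    intro A h
    have hnt : Nontrivial E := h.2
    set B := (hconv A h.1).choose
    have hne : ‖(B.symm : E →L[ℝ] E)‖₊ ≠ 0 := by
      intro h0
      have : (B.symm : E →L[ℝ] E) = 0 := by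
        rwa [nnnorm_eq_zero] at h0
      obtain ⟨x, hx⟩ := exists_ne (0 : E)
      apply hx
      have : x = B (B.symm x) := (B.apply_symm_apply x).symm
      rw [this, show B.symm x = (B.symm : E →L[ℝ] E) x from rfl, ‹(B.symm : E →L[ℝ] E) = 0›]
      simp
    exact pos_iff_ne_zero.mpr (inv_ne_zero hne)
  refine ⟨r, ?_, ?_⟩
  · intro A
    show (if h : A.det ≠ 0 ∧ Nontrivial E then _ else 1) ≠ 0
    split_ifs with h
    · exact (div_pos (hpos A h) two_pos).ne'
    · exact one_ne_zero
  · intro A hA φ s hap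
    rcases subsingleton_or_nontrivial E with hE | hE
    · exact fun x _ y _ _ => Subsingleton.elim x y
    have hx : A.det ≠ 0 ∧ Nontrivial E := ⟨hA, hE⟩
    set B := (hconv A hA).choose with hB
    have hBA : (B : E →L[ℝ] E) = A := (hconv A hA).choose_spec
    have hrA : r A = (‖((B.symm : E ≃L[ℝ] E) : E →L[ℝ] E)‖₊)⁻¹ / 2 := by
      show (if h : A.det ≠ 0 ∧ Nontrivial E then _ else 1) = _
      rw [dif_pos hx]
    rw [← hBA] at hap
    refine hap.injOn (Or.inr ?_)
    rw [hBA, hrA]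
    exact NNReal.half_lt_self (ne_of_gt (hpos A hx))

end AuxInj

lemma mult_change {n m : ℕ} (D₁ D₂ : Set (Cn n)) (hD₁ : IsOpen D₁)
    (hD₂m : MeasurableSet D₂) (hm : 0 < m) (φ : Cn n → Cn n)
    (holo : DifferentiableOn ℂ φ D₁) (hsurj : φ '' D₁ = D₂)
    (Z : Set (Cn n)) (hZ0 : volume Z = 0)
    (hmult : ∀ w ∈ D₂ \ Z, (D₁ ∩ φ ⁻¹' {w}).ncard = m)
    (g : Cn n → ℝ≥0∞) (hg : AEMeasurable g volume) (hgsupp : ∀ w ∉ D₂, g w = 0) :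
    ∫⁻ z in D₁, g (φ z) * (‖Jac φ z‖₊ : ℝ≥0∞)^2 = m * ∫⁻ w in D₂, g w := by
  classical
  set F' : Cn n → (Cn n →L[ℝ] Cn n) := fun z => (fderiv ℂ φ z).restrictScalars ℝ with hF'
  have hdet : ∀ z, (F' z).det = Complex.normSq (Jac φ z) := by
    intro z
    show LinearMap.det _ = _
    rw [ContinuousLinearMap.coe_restrictScalars]
    exact det_restrictScalars_complex _
  have hfd : ∀ z ∈ D₁, HasFDerivAt φ (F' z) z := fun z hz =>
    ((holo.differentiableAt (hD₁.mem_nhds hz)).hasFDerivAt).restrictScalars ℝ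
  have hJm : Measurable (Jac φ) :=
    ContinuousLinearMap.continuous_det.measurable.comp (measurable_fderiv ℂ φ)
  set U : Set (Cn n) := D₁ ∩ {z | Jac φ z ≠ 0} with hU
  have hUm : MeasurableSet U :=
    hD₁.measurableSet.inter (hJm (measurableSet_singleton 0).compl)
  have hUD : U ⊆ D₁ := inter_subset_left
  obtain ⟨r, hrpos, hrinj⟩ := exists_inj_threshold (E := Cn n)
  obtain ⟨t, A, t_disj, t_meas, t_cover, ht_approx, ht_last⟩ :=
    exists_partition_approximatesLinearOn_of_hasFDerivWithinAt φ U F'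
      (fun x hx => (hfd x (hUD hx)).hasFDerivWithinAt) r hrpos
  set S : ℕ → Set (Cn n) := fun k => U ∩ t k with hS
  have hSm : ∀ k, MeasurableSet (S k) := fun k => hUm.inter (t_meas k)
  have hSd : Pairwise (Function.onFun Disjoint S) := fun i j hij =>
    (t_disj hij).mono inter_subset_right inter_subset_right
  have hSU : ⋃ k, S k = U := by
    rw [hS, ← Set.inter_iUnion, Set.inter_eq_left.mpr t_cover]
  have hSsub : ∀ k, S k ⊆ U := fun k => inter_subset_left
  have hSinj : ∀ k, Set.InjOn φ (S k) := by
    intro k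
    rcases eq_empty_or_nonempty U with hUe | hUne
    · have : S k = ∅ := eq_empty_of_subset_empty (hUe ▸ hSsub k)
      rw [this]; exact Set.injOn_empty φ
    · obtain ⟨y, hyU, hyA⟩ := ht_last hUne k
      have hdet0 : (A k).det ≠ 0 := by
        rw [hyA, hdet]
        simpa using hyU.2
      exact hrinj (A k) hdet0 φ (S k) (ht_approx k)
  have hSfd : ∀ k, ∀ x ∈ S k, HasFDerivWithinAt φ (F' x) (S k) x := fun k x hx =>
    (hfd x (hUD (hSsub k hx))).hasFDerivWithinAt
  set T : ℕ → Set (Cn n) := fun k => φ '' S k with hT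
  have hTm : ∀ k, MeasurableSet (T k) := fun k =>
    (hSm k).image_of_continuousOn_injOn
      (holo.continuousOn.mono (fun x hx => hUD (hSsub k hx))) (hSinj k)
  have hnd : ∀ x, ENNReal.ofReal |(F' x).det| = (‖Jac φ x‖₊ : ℝ≥0∞)^2 := by
    intro x
    rw [hdet, _root_.abs_of_nonneg (Complex.normSq_nonneg _)]
    have h1 : Complex.normSq (Jac φ x) = ‖Jac φ x‖^2 := by
      rw [Complex.normSq_eq_norm_sq]
    rw [h1, ENNReal.ofReal_pow (norm_nonneg _), ofReal_norm, enorm_eq_nnnorm]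
  -- Step A : reduce to U
  have hD1U : ∫⁻ z in D₁, g (φ z) * (‖Jac φ z‖₊:ℝ≥0∞)^2
      = ∫⁻ z in U, g (φ z) * (‖Jac φ z‖₊:ℝ≥0∞)^2 := by
    have hCm : MeasurableSet (D₁ ∩ {z | Jac φ z = 0}) :=
      hD₁.measurableSet.inter (hJm (measurableSet_singleton 0))
    have hsplit : D₁ = U ∪ (D₁ ∩ {z | Jac φ z = 0}) := by
      ext z
      by_cases h0 : Jac φ z = 0 <;> simp [hU, h0]
    have hdisj : Disjoint U (D₁ ∩ {z | Jac φ z = 0}) := by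
      rw [Set.disjoint_left]
      rintro z ⟨-, hz2⟩ ⟨-, hz3⟩
      exact hz2 hz3
    rw [show (∫⁻ z in D₁, g (φ z) * (‖Jac φ z‖₊:ℝ≥0∞)^2)
        = ∫⁻ z in U ∪ (D₁ ∩ {z | Jac φ z = 0}), g (φ z) * (‖Jac φ z‖₊:ℝ≥0∞)^2 by rw [← hsplit]]
    rw [lintegral_union hCm hdisj]
    have hzero : ∫⁻ z in D₁ ∩ {z | Jac φ z = 0}, g (φ z) * (‖Jac φ z‖₊:ℝ≥0∞)^2 = 0 := by
      have hz0 : ∀ z ∈ D₁ ∩ {z | Jac φ z = 0},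
          g (φ z) * (‖Jac φ z‖₊:ℝ≥0∞)^2 = (fun _ => (0:ℝ≥0∞)) z := by
        intro z hz
        have : Jac φ z = 0 := hz.2
        simp [this]
      rw [setLIntegral_congr_fun hCm hz0]
      simp
    rw [hzero, add_zero]
  -- Step B : split over pieces
  have hBsplit : ∫⁻ z in U, g (φ z) * (‖Jac φ z‖₊:ℝ≥0∞)^2
      = ∑' k, ∫⁻ z in S k, g (φ z) * (‖Jac φ z‖₊:ℝ≥0∞)^2 := by
    rw [← hSU, lintegral_iUnion hSm hSd]
  -- Step C : change of variables on each piece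
  have hCk : ∀ k, ∫⁻ z in S k, g (φ z) * (‖Jac φ z‖₊:ℝ≥0∞)^2 = ∫⁻ x in T k, g x := by
    intro k
    rw [hT, lintegral_image_eq_lintegral_abs_det_fderiv_mul volume (hSm k) (hSfd k) (hSinj k) g]
    refine lintegral_congr (fun x => ?_)
    rw [hnd, mul_comm]
  -- Step D : back to a single integral
  have hDk : ∀ k, ∫⁻ x in T k, g x
      = ∫⁻ x, (T k).indicator (fun _ => (1:ℝ≥0∞)) x * g x := by
    intro k
    rw [← lintegral_indicator (hTm k)]
    refine lintegral_congr (fun x => ?_)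
    by_cases hx : x ∈ T k <;> simp [hx]
  have hsum : ∑' k, ∫⁻ x, (T k).indicator (fun _ => (1:ℝ≥0∞)) x * g x
      = ∫⁻ x, ∑' k, (T k).indicator (fun _ => (1:ℝ≥0∞)) x * g x :=
    (lintegral_tsum (fun k =>
      ((measurable_one.indicator (hTm k)).aemeasurable.mul hg))).symm
  -- Step E : a.e. identification of the multiplicity
  have himg0 : volume (φ '' (D₁ ∩ {z | Jac φ z = 0})) = 0 := by
    refine addHaar_image_eq_zero_of_det_fderivWithin_eq_zero volume
      (fun x hx => (hfd x hx.1).hasFDerivWithinAt) (fun x hx => ?_)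
    rw [hdet]
    have : Jac φ x = 0 := hx.2
    simp [this]
  have hnull : volume (Z ∪ φ '' (D₁ ∩ {z | Jac φ z = 0})) = 0 :=
    measure_union_null hZ0 himg0
  have hae : ∀ᵐ x : Cn n, x ∉ Z ∪ φ '' (D₁ ∩ {z | Jac φ z = 0}) :=
    measure_eq_zero_iff_ae_notMem.mp hnull
  have hEae : ∀ᵐ x : Cn n, ∑' k, (T k).indicator (fun _ => (1:ℝ≥0∞)) x * g x
      = (m : ℝ≥0∞) * D₂.indicator g x := by
    filter_upwards [hae] with x hx
    by_cases hxD : x ∈ D₂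
    · have hxZ : x ∉ Z := fun h => hx (Or.inl h)
      have hxC : x ∉ φ '' (D₁ ∩ {z | Jac φ z = 0}) := fun h => hx (Or.inr h)
      set Fib : Set (Cn n) := D₁ ∩ φ ⁻¹' {x} with hFib
      have hFm : Fib.ncard = m := hmult x ⟨hxD, hxZ⟩
      have hFfin : Fib.Finite := Set.finite_of_ncard_ne_zero (by rw [hFm]; exact hm.ne')
      have hFU : Fib ⊆ U := by
        rintro z ⟨hz1, hz2⟩
        refine ⟨hz1, fun h0 => hxC ⟨z, ⟨hz1, h0⟩, hz2⟩⟩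
      have hzk : ∀ z ∈ Fib, ∃ k, z ∈ S k := by
        intro z hz
        have := hFU hz
        rw [← hSU] at this
        exact mem_iUnion.mp this
      choose! ι hι using hzk
      have hK : {k | x ∈ T k} = ι '' Fib := by
        ext k
        simp only [Set.mem_setOf_eq, hT, Set.mem_image]
        constructor
        · rintro ⟨z, hzS, hzphi⟩
          have hzF : z ∈ Fib := ⟨hUD (hSsub k hzS), by simp [hzphi]⟩
          have h1 : z ∈ S (ι z) := hι z hzF
          have h2 : ι z = k := by
            by_contra hne
            exact Set.disjoint_left.mp (hSd hne) h1 hzS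
          exact ⟨z, hzF, h2⟩
        · rintro ⟨z, hzF, rfl⟩
          exact ⟨z, hι z hzF, hzF.2⟩
      have hKinj : Set.InjOn ι Fib := by
        intro a ha b hb hab
        have haS : a ∈ S (ι a) := hι a ha
        have hbS : b ∈ S (ι a) := hab ▸ hι b hb
        refine hSinj (ι a) haS hbS ?_
        have h1 : φ a = x := ha.2
        have h2 : φ b = x := hb.2
        rw [h1, h2]
      have hKfin : ({k | x ∈ T k}).Finite := by rw [hK]; exact hFfin.image ι
      have hKcard : ({k | x ∈ T k}).ncard = m := by
        rw [hK, Set.ncard_image_of_injOn hKinj, hFm]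
      have hind : ∀ k, (T k).indicator (fun _ => (1:ℝ≥0∞)) x
          = ({k | x ∈ T k}).indicator (fun _ => (1:ℝ≥0∞)) k := by
        intro k
        by_cases hk : x ∈ T k <;> simp [hk]
      have htsum : ∑' k, (T k).indicator (fun _ => (1:ℝ≥0∞)) x = (m : ℝ≥0∞) := by
        simp only [hind]
        rw [tsum_eq_sum (s := hKfin.toFinset)
          (fun k hk => Set.indicator_of_notMem (by simpa using hk) _)]
        have : ∀ k ∈ hKfin.toFinset, ({k | x ∈ T k}).indicator (fun _ => (1:ℝ≥0∞)) k = 1 := by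
          intro k hk
          exact Set.indicator_of_mem (by simpa using hk) _
        rw [Finset.sum_congr rfl this]
        simp only [Finset.sum_const, nsmul_eq_mul, mul_one]
        rw [← Set.ncard_eq_toFinset_card _ hKfin, hKcard]
      rw [ENNReal.tsum_mul_right, htsum, Set.indicator_of_mem hxD]
    · have hg0 : g x = 0 := hgsupp x hxD
      simp [hg0, Set.indicator_of_notMem hxD]
  -- Step F : conclude
  calc ∫⁻ z in D₁, g (φ z) * (‖Jac φ z‖₊:ℝ≥0∞)^2
      = ∑' k, ∫⁻ x, (T k).indicator (fun _ => (1:ℝ≥0∞)) x * g x := by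
        rw [hD1U, hBsplit]
        exact tsum_congr (fun k => (hCk k).trans (hDk k))
    _ = ∫⁻ x, ∑' k, (T k).indicator (fun _ => (1:ℝ≥0∞)) x * g x := hsum
    _ = ∫⁻ x, (m : ℝ≥0∞) * D₂.indicator g x := lintegral_congr_ae hEae
    _ = (m : ℝ≥0∞) * ∫⁻ x, D₂.indicator g x :=
        lintegral_const_mul' _ _ (ENNReal.natCast_ne_top m)
    _ = (m : ℝ≥0∞) * ∫⁻ w in D₂, g w := by rw [lintegral_indicator hD₂m]


theorem stmt3 {n m : ℕ} (D₁ D₂ : Set (Cn n)) (hD₁ : IsOpen D₁) (hD₂ : IsOpen D₂)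
    (hc₁ : IsConnected D₁) (hc₂ : IsConnected D₂)
    (hb₁ : Bornology.IsBounded D₁) (hb₂ : Bornology.IsBounded D₂)
    (hm : 0 < m) (φ : Cn n → Cn n) (hφ : ProperHoloMult D₁ D₂ φ m)
    (f : Cn n → ℂ) (hf : MemA2 D₂ f) :
    MemA2w D₁ (fun z => ‖Jac φ z‖ ^ 2) (f ∘ φ) ∧
    (m : ℝ) * ∫ w in D₂, ‖f w‖ ^ 2 = ∫ z in D₁, ‖f (φ z)‖ ^ 2 * ‖Jac φ z‖ ^ 2 := by
  classical
  obtain ⟨Z, hZsub, hZ0, hmult⟩ := hφ.mult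
  have hmaps : ∀ z ∈ D₁, φ z ∈ D₂ := fun z hz => hφ.surj ▸ Set.mem_image_of_mem φ hz
  -- the ENNReal-valued integrand
  set G : Cn n → ℝ≥0∞ := fun w => (‖f w‖₊ : ℝ≥0∞)^2 with hG
  set g : Cn n → ℝ≥0∞ := D₂.indicator G with hg_def
  have hfa : AEMeasurable f (volume.restrict D₂) :=
    hf.1.continuousOn.aemeasurable hD₂.measurableSet
  have hGa : AEMeasurable G (volume.restrict D₂) := hfa.enorm.pow_const 2
  have hg : AEMeasurable g volume :=
    (aemeasurable_indicator_iff hD₂.measurableSet).mpr hGa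
  have hgsupp : ∀ w ∉ D₂, g w = 0 := fun w hw => Set.indicator_of_notMem hw _
  have key := mult_change D₁ D₂ hD₁ hD₂.measurableSet hm φ hφ.holo hφ.surj Z hZ0 hmult
    g hg hgsupp
  have hL1 : ∫⁻ z in D₁, g (φ z) * (‖Jac φ z‖₊ : ℝ≥0∞)^2
      = ∫⁻ z in D₁, (‖f (φ z)‖₊ : ℝ≥0∞)^2 * (‖Jac φ z‖₊ : ℝ≥0∞)^2 := by
    refine setLIntegral_congr_fun hD₁.measurableSet ?_
    intro z hz
    dsimp only
    rw [hg_def, Set.indicator_of_mem (hmaps z hz)]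
  have hR1 : ∫⁻ w in D₂, g w = ∫⁻ w in D₂, (‖f w‖₊ : ℝ≥0∞)^2 := by
    refine setLIntegral_congr_fun hD₂.measurableSet ?_
    intro w hw
    rw [hg_def, Set.indicator_of_mem hw]
  have key' : ∫⁻ z in D₁, (‖f (φ z)‖₊ : ℝ≥0∞)^2 * (‖Jac φ z‖₊ : ℝ≥0∞)^2
      = (m : ℝ≥0∞) * ∫⁻ w in D₂, (‖f w‖₊ : ℝ≥0∞)^2 := by
    rw [← hL1, ← hR1]; exact key
  -- basic pointwise identities
  have hofr : ∀ x : ℂ, ENNReal.ofReal (‖x‖^2) = (‖x‖₊ : ℝ≥0∞)^2 := by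
    intro x
    rw [ENNReal.ofReal_pow (norm_nonneg _), ofReal_norm, enorm_eq_nnnorm]
  have hnn : ∀ x : ℂ, ((‖(‖x‖^2 : ℝ)‖₊ : ℝ≥0∞)) = (‖x‖₊ : ℝ≥0∞)^2 := by
    intro x
    rw [← enorm_eq_nnnorm (‖x‖ ^ 2 : ℝ), ← ofReal_norm, Real.norm_of_nonneg (by positivity)]
    exact hofr x
  -- finiteness on D₂
  have hfin2 : ∫⁻ w in D₂, (‖f w‖₊ : ℝ≥0∞)^2 < ⊤ := by
    have h2 := hf.2.2
    rw [MeasureTheory.hasFiniteIntegral_def] at h2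
    have : ∫⁻ w in D₂, ((‖(‖f w‖^2 : ℝ)‖₊ : ℝ≥0∞)) = ∫⁻ w in D₂, (‖f w‖₊ : ℝ≥0∞)^2 :=
      lintegral_congr (fun w => hnn (f w))
    rw [← this]; exact h2
  have hfin1 : ∫⁻ z in D₁, (‖f (φ z)‖₊ : ℝ≥0∞)^2 * (‖Jac φ z‖₊ : ℝ≥0∞)^2 < ⊤ := by
    rw [key']
    exact ENNReal.mul_lt_top (ENNReal.natCast_lt_top m) hfin2
  -- measurability on D₁
  have hJmeas : Measurable (Jac φ) :=
    ContinuousLinearMap.continuous_det.measurable.comp (measurable_fderiv ℂ φ)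
  have hcomp_cont : ContinuousOn (fun z => f (φ z)) D₁ :=
    hf.1.continuousOn.comp hφ.holo.continuousOn hmaps
  have hfφa : AEMeasurable (fun z => f (φ z)) (volume.restrict D₁) :=
    hcomp_cont.aemeasurable hD₁.measurableSet
  have hinta : AEMeasurable (fun z => ‖f (φ z)‖^2 * ‖Jac φ z‖^2) (volume.restrict D₁) :=
    (hfφa.norm.pow_const 2).mul ((hJmeas.norm.pow_const 2).aemeasurable)
  have hIntOn : IntegrableOn (fun z => ‖f (φ z)‖^2 * ‖Jac φ z‖^2) D₁ volume := by
    refine ⟨hinta.aestronglyMeasurable, ?_⟩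
    rw [MeasureTheory.hasFiniteIntegral_def]
    have heq : ∀ z : Cn n, ((‖(‖f (φ z)‖^2 * ‖Jac φ z‖^2 : ℝ)‖₊ : ℝ≥0∞))
        = (‖f (φ z)‖₊ : ℝ≥0∞)^2 * (‖Jac φ z‖₊ : ℝ≥0∞)^2 := by
      intro z
      rw [nnnorm_mul, ENNReal.coe_mul, hnn, hnn]
    exact lt_of_eq_of_lt (lintegral_congr (fun z => heq z)) hfin1
  -- real integral identities
  have hEqD₂ : ∫ w in D₂, ‖f w‖^2 = (∫⁻ w in D₂, (‖f w‖₊ : ℝ≥0∞)^2).toReal := by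
    rw [MeasureTheory.integral_eq_lintegral_of_nonneg_ae
      (MeasureTheory.ae_of_all _ (fun w => by positivity)) hf.2.1]
    congr 1
    exact lintegral_congr (fun w => hofr (f w))
  have hEqD₁ : ∫ z in D₁, ‖f (φ z)‖^2 * ‖Jac φ z‖^2
      = (∫⁻ z in D₁, (‖f (φ z)‖₊ : ℝ≥0∞)^2 * (‖Jac φ z‖₊ : ℝ≥0∞)^2).toReal := by
    rw [MeasureTheory.integral_eq_lintegral_of_nonneg_ae
      (MeasureTheory.ae_of_all _ (fun z => by positivity)) hinta.aestronglyMeasurable]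
    congr 1
    refine lintegral_congr (fun z => ?_)
    rw [ENNReal.ofReal_mul (by positivity), hofr, hofr]
  constructor
  · exact ⟨hf.1.comp hφ.holo hmaps, hIntOn⟩
  · rw [hEqD₂, hEqD₁, key', ENNReal.toReal_mul, ENNReal.toReal_natCast]
end
end

section
/- For x = (x₁,x₂,x₃) ∈ ℂ³, the inequality |x₁ − conj(x₂)x₃| + |x₁x₂ − x₃| < 1 − |x₂|² holds if and only if |x₂ − conj(x₁)x₃| + |x₁x₂ − x₃| < 1 − |x₁|². -/
open Complex ComplexConjugate

set_option maxHeartbeats 1000000 in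
lemma real_key (p q r a b c : ℝ) (hp : 0 ≤ p) (hq : 0 ≤ q) (hr : 0 ≤ r)
    (ha : 0 ≤ a) (hb : 0 ≤ b) (hc : 0 ≤ c)
    (h1 : a^2 = c^2 + (p^2 - r^2)*(1 - q^2))
    (h2 : b^2 = c^2 + (q^2 - r^2)*(1 - p^2))
    (h3 : p ≤ a + q*r)
    (h4 : r ≤ c + p*q)
    (h5 : p*q ≤ c + r)
    (h6 : r*(1-q^2) ≤ c + q*a)
    (h7 : a + c < 1 - q^2) : b + c < 1 - p^2 := by
  have hq1 : q^2 < 1 := by nlinarith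
  have hq1' : q < 1 := by nlinarith
  have hr1 : r < 1 := by nlinarith [mul_nonneg (by linarith : (0:ℝ) ≤ 1 - q) ha]
  have hK : 2*c < 1 - p^2 - q^2 + r^2 := by
    have hac : a < 1 - q^2 - c := by linarith
    have : a^2 < (1 - q^2 - c)^2 := by nlinarith
    nlinarith [sq_nonneg c]
  have hct : c < 1 - p^2 := by
    by_contra hcon
    push_neg at hcon
    have hcr : c < r^2 - q^2 := by nlinarith
    have hA : p*q + q^2 < r + r^2 := by nlinarith
    have hB : r - r^2 < p*q - q^2 := by nlinarith
    have hrq : q < r := by nlinarith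
    have hr0 : 0 < r := by linarith
    have hrr : 0 < r*(1-r) := mul_pos hr0 (by linarith)
    have hq0 : 0 < q := by
      rcases hq.lt_or_eq with h | h
      · exact h
      · exfalso; rw [← h] at hB; nlinarith
    have e1 : r*(1-r)*(1+r) < (p*q-q^2)*(1+r) := by nlinarith
    have e2 : (p*q+q^2)*(1-r) < r*(1+r)*(1-r) := by nlinarith
    have e3 : (p*q+q^2)*(1-r) < (p*q-q^2)*(1+r) := by nlinarith
    have hprq : q < p*r := by nlinarith
    have hsum : p + r < 1 + q := by nlinarith
    have hp2 : 1 + q^2 - r^2 < p^2 := by nlinarith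
    have hsq : (p+r)^2 < (1+q)^2 := by
      have := pow_lt_pow_left₀ hsum (by positivity : (0:ℝ) ≤ p + r) (n := 2) (by norm_num)
      simpa using this
    nlinarith
  have hbc : b^2 < (1 - p^2 - c)^2 := by nlinarith [sq_nonneg c]
  nlinarith [sq_nonneg (b - (1 - p^2 - c))]

lemma ckey (x₁ x₂ x₃ : ℂ)
    (h : ‖x₁ - conj x₂ * x₃‖ + ‖x₁ * x₂ - x₃‖ < 1 - ‖x₂‖ ^ 2) :
    ‖x₂ - conj x₁ * x₃‖ + ‖x₁ * x₂ - x₃‖ < 1 - ‖x₁‖ ^ 2 := by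
  set p := ‖x₁‖ with hpdef
  set q := ‖x₂‖ with hqdef
  set r := ‖x₃‖ with hrdef
  set a := ‖x₁ - conj x₂ * x₃‖ with hadef
  set b := ‖x₂ - conj x₁ * x₃‖ with hbdef
  set c := ‖x₁ * x₂ - x₃‖ with hcdef
  have h1 : a^2 = c^2 + (p^2 - r^2)*(1 - q^2) := by
    simp only [hadef, hcdef, hpdef, hqdef, hrdef, Complex.sq_norm, Complex.normSq_apply,
      Complex.sub_re, Complex.sub_im, Complex.mul_re, Complex.mul_im,
      Complex.conj_re, Complex.conj_im]
    ring
  have h2 : b^2 = c^2 + (q^2 - r^2)*(1 - p^2) := by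
    simp only [hbdef, hcdef, hpdef, hqdef, hrdef, Complex.sq_norm, Complex.normSq_apply,
      Complex.sub_re, Complex.sub_im, Complex.mul_re, Complex.mul_im,
      Complex.conj_re, Complex.conj_im]
    ring
  have h3 : p ≤ a + q*r := by
    have h := norm_add_le (x₁ - conj x₂ * x₃) (conj x₂ * x₃)
    rw [sub_add_cancel] at h
    simpa [norm_mul, Complex.norm_conj] using h
  have h4 : r ≤ c + p*q := by
    have := norm_add_le (x₃ - x₁ * x₂) (x₁ * x₂)
    simpa [norm_mul, norm_sub_rev x₃ (x₁*x₂), ← hcdef, mul_comm] using this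
  have h5 : p*q ≤ c + r := by
    have := norm_add_le (x₁ * x₂ - x₃) x₃
    simpa [norm_mul] using this
  have hq1 : q^2 < 1 := by
    have := norm_nonneg (x₁ - conj x₂ * x₃)
    have := norm_nonneg (x₁ * x₂ - x₃)
    nlinarith
  have h6 : r*(1-q^2) ≤ c + q*a := by
    have key : x₃ * (1 - x₂ * conj x₂) = (x₃ - x₁*x₂) + x₂*(x₁ - conj x₂ * x₃) := by ring
    have e1 : ‖x₃ * (1 - x₂ * conj x₂)‖ = r * (1 - q^2) := by
      rw [norm_mul, Complex.mul_conj]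
      have : (1 : ℂ) - (Complex.normSq x₂ : ℂ) = ((1 - q^2 : ℝ) : ℂ) := by
        push_cast [← Complex.sq_norm]; ring
      rw [this, Complex.norm_real, Real.norm_of_nonneg (by linarith)]
    calc r * (1-q^2) = ‖x₃ * (1 - x₂ * conj x₂)‖ := e1.symm
      _ = ‖(x₃ - x₁*x₂) + x₂*(x₁ - conj x₂ * x₃)‖ := by rw [key]
      _ ≤ ‖x₃ - x₁*x₂‖ + ‖x₂*(x₁ - conj x₂ * x₃)‖ :=
          norm_add_le _ _
      _ = c + q*a := by rw [norm_mul, norm_sub_rev x₃ (x₁*x₂)]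
  exact real_key p q r a b c (norm_nonneg _) (norm_nonneg _)
    (norm_nonneg _) (norm_nonneg _) (norm_nonneg _)
    (norm_nonneg _) h1 h2 h3 h4 h5 h6 h

/-- Equivalence of two of the defining inequalities of the tetrablock. -/
theorem stmt11 (x₁ x₂ x₃ : ℂ) :
    ‖x₁ - conj x₂ * x₃‖ + ‖x₁ * x₂ - x₃‖ < 1 - ‖x₂‖ ^ 2 ↔
    ‖x₂ - conj x₁ * x₃‖ + ‖x₁ * x₂ - x₃‖ < 1 - ‖x₁‖ ^ 2 := by
  constructor
  · exact ckey x₁ x₂ x₃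
  · intro h
    have := ckey x₂ x₁ x₃ (by rwa [mul_comm x₂ x₁])
    rwa [mul_comm x₂ x₁] at this
end

section
/- For (x₁,x₂,x₃) ∈ ℂ³: there exists a symmetric 2×2 complex matrix A with operator norm ‖A‖ < 1 and (x₁,x₂,x₃) = (a₁₁, a₂₂, det A) if and only if |x₃| < 1 and there exist β₁, β₂ ∈ ℂ with |β₁| + |β₂| < 1, x₁ = β₁ + conj(β₂)x₃, and x₂ = β₂ + conj(β₁)x₃. -/
open Complex ComplexConjugate

noncomputable section

lemma normSq_det_eq (a b c d : ℂ) :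
    Complex.normSq (a*d - b*c) =
      (normSq a + normSq c) * (normSq b + normSq d) - normSq (conj a * b + conj c * d) := by
  simp only [Complex.normSq_apply, Complex.mul_re, Complex.mul_im, Complex.sub_re, Complex.sub_im,
    Complex.add_re, Complex.add_im, Complex.conj_re, Complex.conj_im]
  ring

lemma quadform_eq (a b c d y z : ℂ) :
    normSq (a*y + b*z) + normSq (c*y + d*z) =
      (normSq a + normSq c) * normSq y + (normSq b + normSq d) * normSq z
        + 2 * (conj y * (conj a * b + conj c * d) * z).re := by
  simp only [Complex.normSq_apply, Complex.mul_re, Complex.mul_im, Complex.add_re, Complex.add_im,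
    Complex.conj_re, Complex.conj_im]
  ring

lemma norm_sq_apply (A : Matrix (Fin 2) (Fin 2) ℂ) (x : EuclideanSpace ℂ (Fin 2)) :
    ‖Matrix.toEuclideanCLM (𝕜 := ℂ) A x‖^2 =
      normSq (A 0 0 * x 0 + A 0 1 * x 1) + normSq (A 1 0 * x 0 + A 1 1 * x 1) := by
  have hx : x = (WithLp.equiv 2 (Fin 2 → ℂ)).symm (WithLp.equiv 2 (Fin 2 → ℂ) x) := rfl
  rw [EuclideanSpace.norm_eq,
    Real.sq_sqrt (by positivity)]
  simp [Fin.sum_univ_two, Matrix.toLin'_apply, Matrix.mulVec, dotProduct,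
    Complex.sq_norm]

set_option maxHeartbeats 1000000 in
lemma norm_lt_one_iff (A : Matrix (Fin 2) (Fin 2) ℂ) :
    ‖Matrix.toEuclideanCLM (𝕜 := ℂ) A‖ < 1 ↔
      (normSq A.det < 1 ∧
        normSq (A 0 0) + normSq (A 0 1) + normSq (A 1 0) + normSq (A 1 1)
          < 1 + normSq A.det) := by
  set T := Matrix.toEuclideanCLM (𝕜 := ℂ) A with hT
  set a := A 0 0; set b := A 0 1; set c := A 1 0; set d := A 1 1
  set p := normSq a + normSq c with hp'
  set q := normSq b + normSq d with hq'
  set r := conj a * b + conj c * d with hr'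
  have hdet : A.det = a*d - b*c := by rw [Matrix.det_fin_two]
  have hnd : normSq A.det = p*q - normSq r := by rw [hdet]; exact normSq_det_eq a b c d
  have hnx : ∀ x : EuclideanSpace ℂ (Fin 2), ‖x‖^2 = normSq (x 0) + normSq (x 1) := by
    intro x
    rw [EuclideanSpace.norm_eq, Real.sq_sqrt (by positivity)]
    simp [Fin.sum_univ_two, Complex.sq_norm]
  have hTx : ∀ x : EuclideanSpace ℂ (Fin 2),
      ‖T x‖^2 = p * normSq (x 0) + q * normSq (x 1) + 2 * (conj (x 0) * r * (x 1)).re := by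
    intro x
    rw [hT, norm_sq_apply, quadform_eq]
  have hnr : 0 ≤ normSq r := normSq_nonneg r
  have hp0 : 0 ≤ p := add_nonneg (normSq_nonneg _) (normSq_nonneg _)
  have hq0 : 0 ≤ q := add_nonneg (normSq_nonneg _) (normSq_nonneg _)
  constructor
  · intro h
    set k := ‖T‖^2 with hk'
    have hk1 : k < 1 := by nlinarith [norm_nonneg T]
    have key : ∀ y z : ℂ,
        p * normSq y + q * normSq z + 2 * (conj y * r * z).re ≤ k * (normSq y + normSq z) := by
      intro y z
      set x : EuclideanSpace ℂ (Fin 2) := (WithLp.equiv 2 (Fin 2 → ℂ)).symm ![y, z] with hx'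
      have h0 : x 0 = y := rfl
      have h1 : x 1 = z := rfl
      have hb := T.le_opNorm x
      have h2 := hTx x
      have h3 := hnx x
      rw [h0, h1] at h2 h3
      nlinarith [norm_nonneg x, norm_nonneg (T x), norm_nonneg T]
    have hp1 : p ≤ k := by have := key 1 0; simpa using this
    have hq1 : q ≤ k := by have := key 0 1; simpa using this
    have hk0 : 0 ≤ k := le_trans hp0 hp1
    have hmain := key r (((1:ℝ) - p : ℝ) : ℂ)
    rw [Complex.normSq_ofReal] at hmain
    have hre : (conj r * r * (((1:ℝ) - p : ℝ) : ℂ)).re = normSq r * (1 - p) := by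
      rw [mul_comm (conj r) r, Complex.mul_conj, ← Complex.ofReal_mul]
      exact Complex.ofReal_re _
    rw [hre] at hmain
    have hP : 0 < 1 - p := by linarith
    constructor
    · rw [hnd]
      have h4 : p * q ≤ k * k := mul_le_mul hp1 hq1 hq0 hk0
      nlinarith
    · rw [hnd]
      -- from hmain : p*nr + q*(1-p)^2 + 2*(nr*(1-p)) ≤ k*(nr + (1-p)^2)
      have h5 : normSq r * (1 - p) < (1 - q) * (1 - p)^2 := by nlinarith [sq_nonneg (1-p), mul_pos hP hP]
      have h6 : normSq r < (1 - q) * (1 - p) := by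
        have := lt_of_mul_lt_mul_right (by linarith [h5] : normSq r * (1-p) < ((1-q)*(1-p)) * (1-p)) (le_of_lt hP)
        exact this
      nlinarith [h6]
  · rintro ⟨h1, h2⟩
    rw [hnd] at h1 h2
    set s := Real.sqrt ((p - q)^2 + 4 * normSq r) with hs'
    have hs0 : 0 ≤ s := Real.sqrt_nonneg _
    have hs2 : s^2 = (p - q)^2 + 4 * normSq r := Real.sq_sqrt (add_nonneg (sq_nonneg _) (by linarith))
    have hspq : |p - q| ≤ s := by
      rw [← Real.sqrt_sq_eq_abs]
      exact Real.sqrt_le_sqrt (by nlinarith)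
    have habs1 := le_abs_self (p - q)
    have habs2 := neg_abs_le (p - q)
    set lam := (p + q + s) / 2 with hlam'
    have hlp : 0 ≤ lam - p := by rw [hlam']; linarith
    have hlq : 0 ≤ lam - q := by rw [hlam']; linarith
    have hlam0 : 0 ≤ lam := by linarith
    have hF2 : p + q < 2 := by linarith
    have hlam1 : lam < 1 := by
      have hsF : s < 2 - (p + q) := by nlinarith [sq_nonneg (s + p + q - 2)]
      rw [hlam']; linarith
    set α := Real.sqrt (lam - p) with hα'
    set β := Real.sqrt (lam - q) with hβ'
    have hα0 : 0 ≤ α := Real.sqrt_nonneg _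
    have hβ0 : 0 ≤ β := Real.sqrt_nonneg _
    have hα2 : α^2 = lam - p := Real.sq_sqrt hlp
    have hβ2 : β^2 = lam - q := Real.sq_sqrt hlq
    have hαβ : α * β = ‖r‖ := by
      rw [hα', hβ', ← Real.sqrt_mul hlp]
      have hpq : (lam - p) * (lam - q) = normSq r := by
        rw [hlam']; nlinarith [hs2]
      rw [hpq, ← Complex.norm_def]
    have hbd : ∀ x : EuclideanSpace ℂ (Fin 2), ‖T x‖ ≤ Real.sqrt lam * ‖x‖ := by
      intro x
      have hA0 : 0 ≤ ‖x 0‖ := norm_nonneg _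
      have hA1 : 0 ≤ ‖x 1‖ := norm_nonneg _
      have hre : (conj (x 0) * r * (x 1)).re ≤ ‖r‖ * (‖x 0‖ * ‖x 1‖) := by
        calc (conj (x 0) * r * (x 1)).re ≤ ‖conj (x 0) * r * (x 1)‖ := Complex.re_le_norm _
          _ = ‖r‖ * (‖x 0‖ * ‖x 1‖) := by
              rw [norm_mul, norm_mul, Complex.norm_conj]; ring
      have hsq : ‖T x‖^2 ≤ lam * ‖x‖^2 := by
        rw [hTx x, hnx x]
        have e0 : normSq (x 0) = ‖x 0‖^2 := (Complex.sq_norm _).symm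
        have e1 : normSq (x 1) = ‖x 1‖^2 := (Complex.sq_norm _).symm
        have key2 : 2 * (‖r‖ * (‖x 0‖ * ‖x 1‖))
            ≤ (lam - p) * ‖x 0‖^2 + (lam - q) * ‖x 1‖^2 := by
          rw [← hαβ, ← hα2, ← hβ2]
          nlinarith [sq_nonneg (α * ‖x 0‖ - β * ‖x 1‖)]
        rw [e0, e1]
        nlinarith [hre]
      calc ‖T x‖ = Real.sqrt (‖T x‖^2) := (Real.sqrt_sq (norm_nonneg _)).symm
        _ ≤ Real.sqrt (lam * ‖x‖^2) := Real.sqrt_le_sqrt hsq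
        _ = Real.sqrt lam * ‖x‖ := by rw [Real.sqrt_mul hlam0, Real.sqrt_sq (norm_nonneg x)]
    have hnorm : ‖T‖ ≤ Real.sqrt lam := T.opNorm_le_bound (Real.sqrt_nonneg _) hbd
    have : Real.sqrt lam < 1 := by
      have := Real.sqrt_lt_sqrt hlam0 hlam1
      rwa [Real.sqrt_one] at this
    linarith

lemma claimA (a b d : ℂ) :
    (a - conj d * (a*d - b*b)) * (d - conj a * (a*d - b*b)) =
      ((1 + normSq (a*d-b*b) - (normSq a + normSq d + 2*normSq b) : ℝ) : ℂ) * (a*d - b*b)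
        + (b + conj b * (a*d - b*b))^2 := by
  simp only [Complex.ext_iff, Complex.normSq_apply, Complex.mul_re, Complex.mul_im,
    Complex.sub_re, Complex.sub_im, Complex.add_re, Complex.add_im, Complex.conj_re,
    Complex.conj_im, Complex.ofReal_re, Complex.ofReal_im, Complex.one_re, Complex.one_im,
    pow_two]
  constructor <;> ring

lemma claimB (a b d : ℂ) :
    normSq (a - conj d * (a*d - b*b)) + normSq (d - conj a * (a*d - b*b)) =
      (1 - normSq (a*d-b*b))^2
        - (1 + normSq (a*d-b*b) - (normSq a + normSq d + 2*normSq b)) * (1 + normSq (a*d-b*b))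
        - 2 * normSq (b + conj b * (a*d - b*b)) := by
  simp only [Complex.normSq_apply, Complex.mul_re, Complex.mul_im,
    Complex.sub_re, Complex.sub_im, Complex.add_re, Complex.add_im, Complex.conj_re,
    Complex.conj_im]
  ring

lemma claimJ (a d Δ : ℂ) :
    (a - conj d * Δ) + conj (d - conj a * Δ) * Δ = a * (1 - (normSq Δ : ℂ)) := by
  simp only [Complex.ext_iff, Complex.normSq_apply, Complex.mul_re, Complex.mul_im,
    Complex.sub_re, Complex.sub_im, Complex.add_re, Complex.add_im, Complex.conj_re,
    Complex.conj_im, Complex.ofReal_re, Complex.ofReal_im, Complex.one_re, Complex.one_im,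
    map_sub, map_mul, Complex.conj_conj]
  constructor <;> ring

lemma claimK (β₁ β₂ Δ : ℂ) :
    (β₁ + conj β₂ * Δ) - conj (β₂ + conj β₁ * Δ) * Δ = β₁ * (1 - (normSq Δ : ℂ)) := by
  simp only [Complex.ext_iff, Complex.normSq_apply, Complex.mul_re, Complex.mul_im,
    Complex.sub_re, Complex.sub_im, Complex.add_re, Complex.add_im, Complex.conj_re,
    Complex.conj_im, Complex.ofReal_re, Complex.ofReal_im, Complex.one_re, Complex.one_im,
    map_sub, map_add, map_mul, Complex.conj_conj]
  constructor <;> ring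

lemma forward_ineq (nsu nsv nw au av aΔ t : ℝ)
    (hu2 : au^2 = nsu) (hv2 : av^2 = nsv) (hau : 0 ≤ au) (hav : 0 ≤ av)
    (hsum : nsu + nsv = (1 - aΔ^2)^2 - t*(1 + aΔ^2) - 2*nw)
    (hprod : au*av ≤ t*aΔ + nw) (ht : 0 < t) (haΔ : aΔ < 1) (haΔ0 : 0 ≤ aΔ) :
    au + av < 1 - aΔ^2 := by
  have hT2 : 0 < t * (1 - aΔ)^2 := mul_pos ht (pow_pos (by linarith) 2)
  have e1 : (au + av)^2 < (1 - aΔ^2)^2 := by nlinarith [hprod, hsum, hu2, hv2, hT2]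
  have hnd : 0 < 1 - aΔ^2 := by nlinarith
  nlinarith [e1, hnd, hau, hav]

lemma backward_contra (nsu nsv nw au av aΔ t : ℝ)
    (hu2 : au^2 = nsu) (hv2 : av^2 = nsv) (hau : 0 ≤ au) (hav : 0 ≤ av)
    (hsum : nsu + nsv = (1 - aΔ^2)^2 - t*(1 + aΔ^2) - 2*nw)
    (hprod : nw + t*aΔ ≤ au*av) (ht : t ≤ 0)
    (habs : au + av < 1 - aΔ^2) : False := by
  have hT2 : 0 ≤ (-t) * (1 - aΔ)^2 := mul_nonneg (by linarith) (sq_nonneg _)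
  have hyx : 0 < (1 - aΔ^2) + (au + av) := by nlinarith [sq_nonneg aΔ]
  have e2 : (au + av)^2 < (1 - aΔ^2)^2 := by
    nlinarith [mul_pos (sub_pos.2 habs) hyx]
  nlinarith [hT2, hprod, hsum, hu2, hv2, e2]


set_option maxHeartbeats 1000000 in
/-- Equivalence of conditions (5) and (6) characterizing the tetrablock: a point of `ℂ³` is of
the form `(a₁₁, a₂₂, det A)` for a symmetric 2×2 matrix of operator norm `< 1` iff `|x₃| < 1`
and `x₁ = β₁ + conj(β₂) x₃`, `x₂ = β₂ + conj(β₁) x₃` for some `β₁, β₂` with `|β₁| + |β₂| < 1`. -/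
theorem stmt12 (x₁ x₂ x₃ : ℂ) :
    (∃ A : Matrix (Fin 2) (Fin 2) ℂ, A.IsSymm ∧
      ‖Matrix.toEuclideanCLM (𝕜 := ℂ) A‖ < 1 ∧
      x₁ = A 0 0 ∧ x₂ = A 1 1 ∧ x₃ = A.det) ↔
    (‖x₃‖ < 1 ∧ ∃ β₁ β₂ : ℂ,
      ‖β₁‖ + ‖β₂‖ < 1 ∧
      x₁ = β₁ + conj β₂ * x₃ ∧ x₂ = β₂ + conj β₁ * x₃) := by
  constructor
  · rintro ⟨A, hsym, hnrm, hx1, hx2, hx3⟩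
    rw [norm_lt_one_iff] at hnrm
    obtain ⟨hd1, hF⟩ := hnrm
    have hcb : A 1 0 = A 0 1 := hsym.apply 0 1
    set a := A 0 0 with ha'
    set b := A 0 1 with hb'
    set d := A 1 1 with hd'
    have hdet : A.det = a*d - b*b := by rw [Matrix.det_fin_two, hcb]
    rw [hdet] at hd1 hF hx3
    rw [hcb] at hF
    set Δ := a*d - b*b with hΔ'
    set nd := normSq Δ with hnd'
    set u := a - conj d * Δ with hu'
    set v := d - conj a * Δ with hv'
    set w := b + conj b * Δ with hw'
    set t := 1 + nd - (normSq a + normSq d + 2*normSq b) with ht'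
    have ht : 0 < t := by rw [ht']; linarith
    have haΔ2 : ‖Δ‖ ^ 2 = nd := Complex.sq_norm Δ
    have haΔ0 : 0 ≤ ‖Δ‖ := norm_nonneg Δ
    have haΔ : ‖Δ‖ < 1 := by nlinarith
    have h1nd : (0:ℝ) < 1 - nd := by nlinarith
    have habsx3 : ‖x₃‖ < 1 := by rw [hx3]; exact haΔ
    refine ⟨habsx3, u / ((1 - nd : ℝ) : ℂ), v / ((1 - nd : ℝ) : ℂ), ?_, ?_, ?_⟩
    · have hprod : ‖u‖ * ‖v‖ ≤ t * ‖Δ‖ + normSq w := by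
        rw [← norm_mul]
        have hA := claimA a b d
        rw [← hΔ', ← hu', ← hv', ← hw', ← hnd', ← ht'] at hA
        rw [hA]
        calc ‖(t:ℝ) * Δ + w^2‖
            ≤ ‖(t:ℝ) * Δ‖ + ‖w^2‖ := norm_add_le _ _
          _ = t * ‖Δ‖ + normSq w := by
              rw [norm_mul, norm_pow, Complex.norm_real, Real.norm_eq_abs, abs_of_pos ht, Complex.sq_norm]
      have hsum : normSq u + normSq v = (1 - nd)^2 - t*(1+nd) - 2*normSq w := by
        have hB := claimB a b d
        rw [← hΔ', ← hu', ← hv', ← hw', ← hnd', ← ht'] at hB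
        exact hB
      rw [← haΔ2] at hsum
      have habs := forward_ineq (normSq u) (normSq v) (normSq w) (‖u‖)
        (‖v‖) (‖Δ‖) t (Complex.sq_norm u) (Complex.sq_norm v)
        (norm_nonneg u) (norm_nonneg v) hsum hprod ht haΔ haΔ0
      rw [norm_div, norm_div, Complex.norm_real, Real.norm_eq_abs, abs_of_pos h1nd,
        ← add_div, div_lt_one h1nd]
      rw [haΔ2] at habs
      exact habs
    · have hC : ((1 - nd : ℝ) : ℂ) ≠ 0 := by
        exact_mod_cast ne_of_gt h1nd
      have hJ : u + conj v * Δ = a * ((1 - nd : ℝ) : ℂ) := by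
        push_cast
        exact claimJ a d Δ
      rw [hx1, hx3, map_div₀, Complex.conj_ofReal]
      have hrw : u / ((1 - nd : ℝ) : ℂ) + conj v / ((1 - nd : ℝ) : ℂ) * Δ
          = (u + conj v * Δ) / ((1 - nd : ℝ) : ℂ) := by ring
      rw [hrw, hJ, mul_div_cancel_right₀ _ hC]
    · have hC : ((1 - nd : ℝ) : ℂ) ≠ 0 := by
        exact_mod_cast ne_of_gt h1nd
      have hJ : v + conj u * Δ = d * ((1 - nd : ℝ) : ℂ) := by
        push_cast
        have := claimJ d a Δ
        linear_combination this
      rw [hx2, hx3, map_div₀, Complex.conj_ofReal]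
      have hrw : v / ((1 - nd : ℝ) : ℂ) + conj u / ((1 - nd : ℝ) : ℂ) * Δ
          = (v + conj u * Δ) / ((1 - nd : ℝ) : ℂ) := by ring
      rw [hrw, hJ, mul_div_cancel_right₀ _ hC]
  · rintro ⟨hx3abs, β₁, β₂, hβ, he1, he2⟩
    obtain ⟨b, hb⟩ : ∃ b : ℂ, b ^ 2 = x₁ * x₂ - x₃ :=
      IsAlgClosed.exists_pow_nat_eq (x₁ * x₂ - x₃) (by norm_num : (0:ℕ) < 2)
    have hΔ : x₃ = x₁ * x₂ - b*b := by linear_combination hb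
    set nd := normSq x₃ with hnd'
    have haΔ2 : ‖x₃‖ ^ 2 = nd := Complex.sq_norm x₃
    have haΔ0 : 0 ≤ ‖x₃‖ := norm_nonneg x₃
    have h1nd : (0:ℝ) < 1 - nd := by nlinarith
    set A : Matrix (Fin 2) (Fin 2) ℂ := !![x₁, b; b, x₂] with hA'
    have hsym : A.IsSymm := by
      rw [hA']
      ext i j
      fin_cases i <;> fin_cases j <;> simp [Matrix.transpose_apply]
    have h00 : A 0 0 = x₁ := rfl
    have h01 : A 0 1 = b := rfl
    have h10 : A 1 0 = b := rfl
    have h11 : A 1 1 = x₂ := rfl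
    have hdet : A.det = x₃ := by
      rw [hA', Matrix.det_fin_two_of]
      linear_combination -hΔ
    set u := x₁ - conj x₂ * x₃ with hu'
    set v := x₂ - conj x₁ * x₃ with hv'
    set w := b + conj b * x₃ with hw'
    set t := 1 + nd - (normSq x₁ + normSq x₂ + 2*normSq b) with ht'
    have hu : u = β₁ * (1 - (nd:ℂ)) := by
      rw [hu', hnd']
      nth_rewrite 1 [he1]
      nth_rewrite 1 [he2]
      exact claimK β₁ β₂ x₃
    have hv : v = β₂ * (1 - (nd:ℂ)) := by
      rw [hv', hnd']
      nth_rewrite 1 [he2]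
      nth_rewrite 1 [he1]
      exact claimK β₂ β₁ x₃
    have habs1nd : ‖1 - (nd:ℂ)‖ = 1 - nd := by
      rw [show (1 - (nd:ℂ)) = ((1 - nd : ℝ) : ℂ) by push_cast; ring,
        Complex.norm_real, Real.norm_eq_abs, abs_of_pos h1nd]
    have hau : ‖u‖ = ‖β₁‖ * (1 - nd) := by
      rw [hu, norm_mul, habs1nd]
    have hav : ‖v‖ = ‖β₂‖ * (1 - nd) := by
      rw [hv, norm_mul, habs1nd]
    have habs : ‖u‖ + ‖v‖ < 1 - nd := by
      rw [hau, hav]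
      nlinarith [norm_nonneg β₁, norm_nonneg β₂]
    have ht : 0 < t := by
      by_contra hcon
      push_neg at hcon
      have hA2 := claimA x₁ b x₂
      have hB2 := claimB x₁ b x₂
      rw [← hΔ] at hA2 hB2
      rw [← hu', ← hv', ← hw', ← hnd', ← ht'] at hA2 hB2
      have hprod : normSq w + t * ‖x₃‖ ≤ ‖u‖ * ‖v‖ := by
        rw [← norm_mul, hA2]
        have h1 : ‖w^2‖ ≤ ‖((t:ℝ)) * x₃ + w^2‖
            + ‖-(((t:ℝ)) * x₃)‖ := by
          calc ‖w^2‖ = ‖(((t:ℝ)) * x₃ + w^2) + (-(((t:ℝ)) * x₃))‖ := by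
                congr 1; ring
            _ ≤ _ := norm_add_le _ _
        rw [norm_neg, norm_mul, norm_pow, Complex.norm_real, Real.norm_eq_abs, Complex.sq_norm,
          abs_of_nonpos hcon] at h1
        linarith
      rw [← haΔ2] at hB2 habs
      exact backward_contra (normSq u) (normSq v) (normSq w) (‖u‖) (‖v‖)
        (‖x₃‖) t (Complex.sq_norm u) (Complex.sq_norm v) (norm_nonneg u)
        (norm_nonneg v) hB2 hprod hcon habs
    refine ⟨A, hsym, ?_, h00.symm, h11.symm, hdet.symm⟩
    rw [norm_lt_one_iff, hdet, h00, h01, h10, h11]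
    constructor
    · rw [← hnd']; linarith
    · rw [← hnd']; rw [ht'] at ht; linarith
end
end

section
/- The pentablock 𝒫 ⊂ ℂ³ is not a Reinhardt domain: (0, 2, 1) lies in the closure of 𝒫 but (0, 2i, 1) does not. -/
open Complex Topology Filter

set_option synthInstance.maxHeartbeats 400000
set_option maxHeartbeats 1000000
noncomputable section

/-- The pentablock `𝒫 = {(a₂₁, tr A, det A) : ‖A‖ < 1}`. -/
def Pentablock : Set (ℂ × ℂ × ℂ) :=
  {x | ∃ A : Matrix (Fin 2) (Fin 2) ℂ, ‖Matrix.toEuclideanCLM (𝕜 := ℂ) A‖ < 1 ∧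
    x = (A 1 0, A.trace, A.det)}

lemma pent_col (A : Matrix (Fin 2) (Fin 2) ℂ) (h : ‖Matrix.toEuclideanCLM (𝕜 := ℂ) A‖ < 1)
    (j : Fin 2) : ‖A 0 j‖ ^ 2 + ‖A 1 j‖ ^ 2 < 1 := by
  have h1 := (Matrix.toEuclideanCLM (𝕜 := ℂ) A).le_opNorm ((WithLp.equiv 2 _).symm (Pi.single j 1))
  change ‖(WithLp.equiv 2 ((i : Fin 2) → ℂ)).symm (A.mulVec (Pi.single j 1))‖ ≤ _ at h1
  have h2 : ‖((WithLp.equiv 2 ((i : Fin 2) → ℂ)).symm (Pi.single j (1:ℂ)))‖ = 1 := by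
    rw [show ((WithLp.equiv 2 ((i : Fin 2) → ℂ)).symm (Pi.single j (1:ℂ))) =
      EuclideanSpace.single j 1 from rfl]
    simp
  rw [h2, mul_one] at h1
  have h3 : ‖((WithLp.equiv 2 ((i : Fin 2) → ℂ)).symm (A.mulVec (Pi.single j 1)))‖ ^ 2 =
      ‖A 0 j‖ ^ 2 + ‖A 1 j‖ ^ 2 := by
    rw [EuclideanSpace.norm_eq, Real.sq_sqrt (by positivity)]
    simp [Fin.sum_univ_two, Matrix.mulVec_single]
  rw [← h3]
  exact pow_lt_one₀ (norm_nonneg _) (lt_of_le_of_lt h1 h) two_ne_zero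

lemma pent_key (A : Matrix (Fin 2) (Fin 2) ℂ) (h : ‖Matrix.toEuclideanCLM (𝕜 := ℂ) A‖ < 1) :
    ‖A.trace ^ 2 - 4 * A.det‖ ≤ 4 := by
  have hc0 := pent_col A h 0
  have hc1 := pent_col A h 1
  set a := A 0 0; set b := A 0 1; set c := A 1 0; set d := A 1 1
  have he : A.trace ^ 2 - 4 * A.det = (a - d) ^ 2 + 4 * (b * c) := by
    rw [Matrix.trace_fin_two, Matrix.det_fin_two]; ring
  rw [he]
  calc ‖(a - d) ^ 2 + 4 * (b * c)‖ ≤ ‖(a - d) ^ 2‖ + ‖4 * (b * c)‖ := norm_add_le _ _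
    _ = ‖a - d‖ ^ 2 + 4 * (‖b‖ * ‖c‖) := by
        rw [norm_pow, norm_mul, norm_mul]; norm_num
    _ ≤ 4 := by
        have h1 : ‖a - d‖ ≤ ‖a‖ + ‖d‖ := norm_sub_le _ _
        nlinarith [norm_nonneg (a - d), norm_nonneg a, norm_nonneg b, norm_nonneg c,
          norm_nonneg d, sq_nonneg (‖a‖ - ‖d‖), sq_nonneg (‖b‖ - ‖c‖)]

/-- The pentablock is not a Reinhardt domain: `(0,2,1)` lies in its closure but `(0,2i,1)`
does not. -/
theorem stmt16 :
    ((0 : ℂ), (2 : ℂ), (1 : ℂ)) ∈ closure Pentablock ∧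
    ((0 : ℂ), (2 * I : ℂ), (1 : ℂ)) ∉ closure Pentablock := by
  constructor
  · -- approach along r ↦ (0, 2r, r²)
    set r : ℕ → ℝ := fun n => 1 - 1 / (n + 1) with hr
    have hr01 : ∀ n, 0 ≤ r n ∧ r n < 1 := by
      intro n
      constructor
      · have : (1 : ℝ) / (n + 1) ≤ 1 := by
          rw [div_le_one (by positivity)]; linarith [Nat.cast_nonneg (α := ℝ) n]
        simp only [hr]; linarith
      · have : (0 : ℝ) < 1 / (n + 1) := by positivity
        simp only [hr]; linarith
    have htend : Filter.Tendsto (fun n => (((0 : ℂ), (2 * (r n : ℂ) : ℂ), ((r n : ℂ)) ^ 2)))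
        Filter.atTop (𝓝 ((0 : ℂ), (2 : ℂ), (1 : ℂ))) := by
      have h0 : Filter.Tendsto r Filter.atTop (𝓝 1) := by
        have := tendsto_one_div_add_atTop_nhds_zero_nat (𝕜 := ℝ)
        simpa [hr] using tendsto_const_nhds.sub this
      have h1 : Filter.Tendsto (fun n => ((r n : ℂ))) Filter.atTop (𝓝 1) := by
        have := (Complex.continuous_ofReal.tendsto 1).comp h0
        exact this
      have h2 : Filter.Tendsto (fun n => (2 * (r n : ℂ))) Filter.atTop (𝓝 2) := by
        simpa using (tendsto_const_nhds (x := (2:ℂ))).mul h1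
      have h3 : Filter.Tendsto (fun n => ((r n : ℂ)) ^ 2) Filter.atTop (𝓝 1) := by
        simpa using h1.pow 2
      rw [nhds_prod_eq, nhds_prod_eq]
      exact (tendsto_const_nhds : Filter.Tendsto _ Filter.atTop (𝓝 (0:ℂ))).prodMk (h2.prodMk h3)
    refine mem_closure_of_tendsto htend (Filter.Eventually.of_forall fun n => ?_)
    refine ⟨(r n : ℂ) • (1 : Matrix (Fin 2) (Fin 2) ℂ), ?_, ?_⟩
    · rw [map_smul, map_one]
      have hh : ‖((r n : ℝ) : ℂ) • (1 : EuclideanSpace ℂ (Fin 2) →L[ℂ] EuclideanSpace ℂ (Fin 2))‖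
          ≤ ‖((r n : ℝ) : ℂ)‖ * ‖(1 : EuclideanSpace ℂ (Fin 2) →L[ℂ] EuclideanSpace ℂ (Fin 2))‖ :=
        ContinuousLinearMap.opNorm_smul_le _ _
      refine lt_of_le_of_lt hh ?_
      calc ‖((r n : ℝ) : ℂ)‖ * ‖(1 : EuclideanSpace ℂ (Fin 2) →L[ℂ] EuclideanSpace ℂ (Fin 2))‖
          ≤ ‖((r n : ℝ) : ℂ)‖ * 1 := by
            gcongr
            exact ContinuousLinearMap.norm_id_le
        _ < 1 := by
            rw [mul_one, Complex.norm_real, Real.norm_eq_abs,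
              _root_.abs_of_nonneg (hr01 n).1]
            exact (hr01 n).2
    · have e1 : ((r n : ℂ) • (1 : Matrix (Fin 2) (Fin 2) ℂ)) 1 0 = 0 := by
        simp [Matrix.smul_apply, Matrix.one_apply]
      have e2 : ((r n : ℂ) • (1 : Matrix (Fin 2) (Fin 2) ℂ)).trace = 2 * (r n : ℂ) := by
        rw [Matrix.trace_smul, Matrix.trace_one]
        simp [Fintype.card_fin]; ring
      have e3 : ((r n : ℂ) • (1 : Matrix (Fin 2) (Fin 2) ℂ)).det = ((r n : ℂ)) ^ 2 := by
        rw [Matrix.det_smul, Matrix.det_one]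
        simp [Fintype.card_fin]
      rw [e1, e2, e3]
  · intro hmem
    have hsub : closure Pentablock ⊆ {x : ℂ × ℂ × ℂ | ‖x.2.1 ^ 2 - 4 * x.2.2‖ ≤ 4} := by
      apply closure_minimal
      · rintro x ⟨A, hA, rfl⟩
        exact pent_key A hA
      · apply isClosed_le _ continuous_const
        fun_prop
    have := hsub hmem
    simp only [Set.mem_setOf_eq] at this
    have h8 : ‖(2 * I : ℂ) ^ 2 - 4 * 1‖ = 8 := by
      have : (2 * I : ℂ) ^ 2 - 4 * 1 = -8 := by
        rw [mul_pow, Complex.I_sq]; ring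
      rw [this]
      simp
    rw [h8] at this
    linarith
end
end

section
/- The complex Jacobian determinant of the symmetrization map π_n(z₁,…,z_n) = (e₁(z),…,e_n(z)) equals ± the Vandermonde determinant ∏_{1 ≤ j < k ≤ n} (z_j − z_k); in particular it is a homogeneous polynomial of degree n(n−1)/2. -/
open Complex

noncomputable section

def symMap (n : ℕ) (z : Fin n → ℂ) : Fin n → ℂ :=
  fun k => ∑ s ∈ Finset.univ.powersetCard (k.val + 1), ∏ i ∈ s, z i

/-- Elementary symmetric sum of `z` over a finset `s`, degree `k`. -/
def esOn {ι : Type*} (z : ι → ℂ) (s : Finset ι) (k : ℕ) : ℂ :=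
  ∑ t ∈ s.powersetCard k, ∏ i ∈ t, z i

lemma esOn_zero {ι : Type*} (z : ι → ℂ) (s : Finset ι) : esOn z s 0 = 1 := by
  simp [esOn]

lemma esOn_insert {ι : Type*} [DecidableEq ι] (z : ι → ℂ) {a : ι} {s : Finset ι}
    (h : a ∉ s) (k : ℕ) :
    esOn z (insert a s) (k + 1) = esOn z s (k + 1) + z a * esOn z s k := by
  rw [esOn, Finset.powersetCard_succ_insert h, Finset.sum_union, Finset.sum_image]
  · rw [esOn, esOn, Finset.mul_sum]
    congr 1
    refine Finset.sum_congr rfl fun t ht => ?_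
    have hat : a ∉ t := fun hat => h ((Finset.mem_powersetCard.1 ht).1 hat)
    rw [Finset.prod_insert hat]
  · intro t ht u hu htu
    have hat : a ∉ t := fun hat => h ((Finset.mem_powersetCard.1 ht).1 hat)
    have hau : a ∉ u := fun hau => h ((Finset.mem_powersetCard.1 hu).1 hau)
    have := congrArg (fun v => Finset.erase v a) htu
    simpa [Finset.erase_insert hat, Finset.erase_insert hau] using this
  · rw [Finset.disjoint_left]
    intro t ht ht'
    obtain ⟨u, hu, rfl⟩ := Finset.mem_image.1 ht'
    exact h ((Finset.mem_powersetCard.1 ht).1 (Finset.mem_insert_self a u))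

lemma esOn_map {ι κ : Type*} (z : κ → ℂ) (f : ι ↪ κ) (s : Finset ι) (k : ℕ) :
    esOn z (s.map f) k = esOn (z ∘ f) s k := by
  rw [esOn, esOn, Finset.powersetCard_map, Finset.sum_map]
  refine Finset.sum_congr rfl fun t _ => ?_
  have : (Finset.mapEmbedding f).toEmbedding t = t.map f := rfl
  rw [this, Finset.prod_map]; rfl

/-- The Jacobian matrix of `symMap`. -/
def jmat (n : ℕ) (z : Fin n → ℂ) : Matrix (Fin n) (Fin n) ℂ :=
  Matrix.of fun k j => esOn z (Finset.univ.erase j) k.val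

lemma sum_powersetCard_erase (n k : ℕ) (z : Fin n → ℂ) (j : Fin n) :
    ∑ s ∈ (Finset.univ : Finset (Fin n)).powersetCard (k + 1),
      (if j ∈ s then ∏ l ∈ s.erase j, z l else 0) = esOn z (Finset.univ.erase j) k := by
  rw [← Finset.sum_filter, esOn]
  refine Finset.sum_bij' (fun s _ => s.erase j) (fun t _ => insert j t) ?_ ?_ ?_ ?_ ?_
  · intro s hs
    simp only [Finset.mem_filter, Finset.mem_powersetCard] at hs
    simp only [Finset.mem_powersetCard]
    refine ⟨fun x hx => Finset.mem_erase.2 ⟨(Finset.mem_erase.1 hx).1, Finset.mem_univ x⟩, ?_⟩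
    rw [Finset.card_erase_of_mem hs.2, hs.1.2]; omega
  · intro t ht
    simp only [Finset.mem_powersetCard] at ht
    have hjt : j ∉ t := fun hjt => (Finset.mem_erase.1 (ht.1 hjt)).1 rfl
    simp only [Finset.mem_filter, Finset.mem_powersetCard]
    exact ⟨⟨fun x _ => Finset.mem_univ x, by rw [Finset.card_insert_of_notMem hjt, ht.2]⟩,
      Finset.mem_insert_self j t⟩
  · intro s hs
    simp only [Finset.mem_filter] at hs
    exact Finset.insert_erase hs.2
  · intro t ht
    simp only [Finset.mem_powersetCard] at ht
    have hjt : j ∉ t := fun hjt => (Finset.mem_erase.1 (ht.1 hjt)).1 rfl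
    exact Finset.erase_insert hjt
  · intro s hs; rfl

/-- The derivative of `symMap` as a continuous linear map. -/
def jder (n : ℕ) (z : Fin n → ℂ) : (Fin n → ℂ) →L[ℂ] (Fin n → ℂ) :=
  ContinuousLinearMap.pi fun k =>
    ∑ s ∈ (Finset.univ : Finset (Fin n)).powersetCard (k.val + 1),
      ∑ i ∈ s, (∏ l ∈ s.erase i, z l) • ContinuousLinearMap.proj i

lemma hasFDerivAt_symMap (n : ℕ) (z : Fin n → ℂ) :
    HasFDerivAt (symMap n) (jder n z) z := by
  refine hasFDerivAt_pi'' fun k => ?_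
  have h : HasFDerivAt (fun w : Fin n → ℂ =>
      ∑ s ∈ (Finset.univ : Finset (Fin n)).powersetCard (k.val + 1), ∏ i ∈ s, w i)
      (∑ s ∈ (Finset.univ : Finset (Fin n)).powersetCard (k.val + 1),
        ∑ i ∈ s, (∏ l ∈ s.erase i, z l) •
          ContinuousLinearMap.proj (R := ℂ) (φ := fun _ : Fin n => ℂ) i) z := by
    refine HasFDerivAt.fun_sum fun s _ => ?_
    exact HasFDerivAt.finset_prod fun i _ => hasFDerivAt_apply i z
  have he : (ContinuousLinearMap.proj (R := ℂ) (φ := fun _ : Fin n => ℂ) k).comp (jder n z) =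
      ∑ s ∈ (Finset.univ : Finset (Fin n)).powersetCard (k.val + 1),
        ∑ i ∈ s, (∏ l ∈ s.erase i, z l) • ContinuousLinearMap.proj i := by
    simp only [jder, ContinuousLinearMap.proj_pi]
  rw [he]
  exact h

lemma toMatrix_jder (n : ℕ) (z : Fin n → ℂ) :
    LinearMap.toMatrix' ((jder n z) : (Fin n → ℂ) →ₗ[ℂ] (Fin n → ℂ)) = jmat n z := by
  ext k j
  rw [LinearMap.toMatrix'_apply]
  have : (jder n z) (fun l => if l = j then (1:ℂ) else 0) k =
      ∑ s ∈ (Finset.univ : Finset (Fin n)).powersetCard (k.val + 1),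
        (if j ∈ s then ∏ l ∈ s.erase j, z l else 0) := by
    simp only [jder, ContinuousLinearMap.coe_pi', ContinuousLinearMap.coe_sum',
      Finset.sum_apply, ContinuousLinearMap.smul_apply, ContinuousLinearMap.proj_apply,
      ContinuousLinearMap.pi_apply]
    refine Finset.sum_congr rfl fun s _ => ?_
    rw [← Finset.sum_ite_eq' s j (fun i => ∏ l ∈ s.erase i, z l)]
    refine Finset.sum_congr rfl fun i _ => ?_
    by_cases hij : i = j <;> simp [hij]
  have hps : (Pi.single j 1 : Fin n → ℂ) = fun l => if l = j then (1:ℂ) else 0 := by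
    funext l; simp [Pi.single_apply]
  exact (congrArg (fun v => jder n z v k) hps).trans (this.trans (sum_powersetCard_erase n k.val z j))

lemma det_fderiv (n : ℕ) (z : Fin n → ℂ) :
    (fderiv ℂ (symMap n) z).det = (jmat n z).det := by
  rw [(hasFDerivAt_symMap n z).fderiv]
  show LinearMap.det _ = _
  rw [← toMatrix_jder n z, LinearMap.det_toMatrix']

lemma univ_erase_last (n : ℕ) :
    (Finset.univ : Finset (Fin (n+1))).erase (Fin.last n) = Finset.univ.map Fin.castSuccEmb := by
  ext j
  simp only [Finset.mem_erase, Finset.mem_univ, and_true, Finset.mem_map]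
  constructor
  · intro h
    obtain ⟨i, hi⟩ := Fin.exists_castSucc_eq.2 h
    exact ⟨i, by trivial, hi⟩
  · rintro ⟨i, -, rfl⟩
    exact (Fin.castSucc_lt_last i).ne

lemma Ioi_castSucc_eq (n : ℕ) (i : Fin n) :
    Finset.Ioi (Fin.castSucc i) = insert (Fin.last n) ((Finset.Ioi i).map Fin.castSuccEmb) := by
  ext j
  simp only [Finset.mem_Ioi, Finset.mem_insert, Finset.mem_map]
  constructor
  · intro h
    rcases eq_or_ne j (Fin.last n) with rfl | hj
    · exact Or.inl rfl
    · obtain ⟨i', rfl⟩ := Fin.exists_castSucc_eq.2 hj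
      exact Or.inr ⟨i', Fin.castSucc_lt_castSucc_iff.1 h, rfl⟩
  · rintro (rfl | ⟨i', hi', rfl⟩)
    · exact Fin.castSucc_lt_last i
    · exact Fin.castSucc_lt_castSucc_iff.2 hi'

lemma prod_pairs (m : ℕ) (f : Fin m → Fin m → ℂ) :
    ∏ p ∈ Finset.univ.filter (fun p : Fin m × Fin m => p.1 < p.2), f p.1 p.2 =
      ∏ i, ∏ j ∈ Finset.Ioi i, f i j := by
  rw [Finset.prod_filter, ← Finset.univ_product_univ, Finset.prod_product]
  refine Finset.prod_congr rfl fun i _ => ?_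
  rw [← Finset.prod_filter]
  congr 1
  ext j
  simp

lemma last_not_mem_map_castSucc (n : ℕ) (s : Finset (Fin n)) :
    Fin.last n ∉ s.map Fin.castSuccEmb := by
  rw [Finset.mem_map]
  rintro ⟨a, -, ha⟩
  exact (Fin.castSucc_lt_last a).ne ha

lemma prod_pairs_succ (n : ℕ) (f : Fin (n+1) → Fin (n+1) → ℂ) :
    (∏ i, ∏ j ∈ Finset.Ioi i, f i j) =
      (∏ i : Fin n, f (Fin.castSucc i) (Fin.last n)) *
        ∏ i : Fin n, ∏ j ∈ Finset.Ioi i, f (Fin.castSucc i) (Fin.castSucc j) := by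
  rw [Fin.prod_univ_castSucc]
  have hlast : Finset.Ioi (Fin.last n) = ∅ := by
    ext j
    simp [not_lt.2 (Fin.le_last j)]
  rw [hlast, Finset.prod_empty, mul_one, ← Finset.prod_mul_distrib]
  refine Finset.prod_congr rfl fun i _ => ?_
  rw [Ioi_castSucc_eq, Finset.prod_insert (last_not_mem_map_castSucc n _), Finset.prod_map]
  rfl

lemma det_jmat (n : ℕ) : ∃ ε : ℂ, (ε = 1 ∨ ε = -1) ∧ ∀ z : Fin n → ℂ,
    (jmat n z).det =
      ε * ∏ p ∈ Finset.univ.filter (fun p : Fin n × Fin n => p.1 < p.2), (z p.1 - z p.2) := by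
  induction n with
  | zero =>
    refine ⟨1, Or.inl rfl, fun z => ?_⟩
    have : (Finset.univ : Finset (Fin 0 × Fin 0)) = ∅ := by simp
    simp [Matrix.det_fin_zero, this]
  | succ n ih =>
    obtain ⟨ε, hε, h⟩ := ih
    refine ⟨ε, hε, fun z => ?_⟩
    set L := Fin.last n with hL
    set M := jmat (n+1) z with hM
    set S : Fin n → Finset (Fin (n+1)) :=
      fun j => (Finset.univ.erase j).map Fin.castSuccEmb with hSdef
    -- facts about S
    have hlS : ∀ j : Fin n, L ∉ S j := fun j => last_not_mem_map_castSucc n _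
    have hcS : ∀ j : Fin n, Fin.castSucc j ∉ S j := by
      intro j hj
      rw [hSdef, Finset.mem_map] at hj
      obtain ⟨a, ha, ha'⟩ := hj
      have : a = j := Fin.castSucc_injective n ha'
      subst this
      exact (Finset.mem_erase.1 ha).1 rfl
    have hS1 : ∀ j : Fin n, (Finset.univ : Finset (Fin (n+1))).erase L =
        insert (Fin.castSucc j) (S j) := by
      intro j
      rw [univ_erase_last, hSdef]
      conv_lhs => rw [show (Finset.univ : Finset (Fin n)) = insert j (Finset.univ.erase j) from
        (Finset.insert_erase (Finset.mem_univ j)).symm]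
      rw [Finset.map_insert]
      rfl
    have hS2 : ∀ j : Fin n, (Finset.univ : Finset (Fin (n+1))).erase (Fin.castSucc j) =
        insert L (S j) := by
      intro j
      have h1 : S j = ((Finset.univ : Finset (Fin (n+1))).erase (Fin.castSucc j)).erase L := by
        show (Finset.univ.erase j).map Fin.castSuccEmb = _
        rw [Finset.map_erase, ← univ_erase_last, Finset.erase_right_comm]
        rfl
      rw [h1, Finset.insert_erase]
      exact Finset.mem_erase.2 ⟨fun hcon => (Fin.castSucc_lt_last j).ne' hcon, Finset.mem_univ _⟩
    -- the key entry computation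
    have key : ∀ (k : Fin n) (j : Fin n),
        M k.succ (Fin.castSucc j) - M k.succ L =
          (z L - z (Fin.castSucc j)) * jmat n (z ∘ Fin.castSucc) k j := by
      intro k j
      have e1 : M k.succ (Fin.castSucc j) = esOn z (S j) (k.val + 1)
          + z L * esOn z (S j) k.val := by
        show esOn z (Finset.univ.erase (Fin.castSucc j)) (k.succ.val) = _
        rw [hS2 j, Fin.val_succ, esOn_insert z (hlS j)]
      have e2 : M k.succ L = esOn z (S j) (k.val + 1)
          + z (Fin.castSucc j) * esOn z (S j) k.val := by
        show esOn z (Finset.univ.erase L) (k.succ.val) = _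
        rw [hS1 j, Fin.val_succ, esOn_insert z (hcS j)]
      have e3 : esOn z (S j) k.val = jmat n (z ∘ Fin.castSucc) k j := by
        rw [hSdef, esOn_map]
        rfl
      rw [e1, e2, e3]
      ring
    -- the elementary column-operation matrix
    set E : Matrix (Fin (n+1)) (Fin (n+1)) ℂ :=
      Matrix.of fun i j => if i = j then 1 else if i = L then -1 else 0 with hE
    have hdetE : E.det = 1 := by
      have ht : E.BlockTriangular OrderDual.toDual := by
        intro i j hij
        have hij' : i < j := hij
        have h1 : i ≠ j := ne_of_lt hij'
        have h2 : i ≠ L := ne_of_lt (lt_of_lt_of_le hij' (Fin.le_last j))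
        simp [hE, h1, h2]
      rw [Matrix.det_of_lowerTriangular E ht]
      simp [hE]
    set F := M * E with hF
    have hFa : ∀ k j, F k j = if j = L then M k L else M k j - M k L := by
      intro k j
      rw [hF, Matrix.mul_apply]
      by_cases hj : j = L
      · subst hj
        rw [Finset.sum_eq_single L]
        · simp [hE]
        · intro i _ hi
          simp [hE, hi]
        · simp
      · have hterm : ∀ i, M k i * E i j =
            (if i = j then M k i else 0) + (if i = L then -(M k i) else 0) := by
          intro i
          by_cases h1 : i = j
          · subst h1
            simp [hE, hj]
          · by_cases h2 : i = L
            · subst h2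
              have hLj : ¬ (L = j) := fun hcon => hj hcon.symm
              simp [hE, h1, hLj]
            · simp [hE, h1, h2]
        rw [if_neg hj]
        simp_rw [hterm]
        rw [Finset.sum_add_distrib, Finset.sum_ite_eq' Finset.univ j,
          Finset.sum_ite_eq' Finset.univ L]
        simp [sub_eq_add_neg]
    have hF0 : ∀ j, F 0 j = if j = L then 1 else 0 := by
      intro j
      have hM0 : ∀ j', M 0 j' = 1 := by
        intro j'
        show esOn z (Finset.univ.erase j') ((0 : Fin (n+1)).val) = 1
        rw [Fin.val_zero, esOn_zero]
      rw [hFa]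
      by_cases hj : j = L <;> simp [hj, hM0]
    have hdet1 : M.det = F.det := by
      rw [hF, Matrix.det_mul, hdetE, mul_one]
    have hdet2 : F.det = (-1 : ℂ)^n * (F.submatrix Fin.succ Fin.castSucc).det := by
      rw [Matrix.det_succ_row_zero]
      rw [Finset.sum_eq_single L]
      · rw [hF0, if_pos rfl, hL]
        simp [Fin.succAbove_last]
      · intro j _ hj
        rw [hF0, if_neg hj]
        ring
      · simp
    have hsub : F.submatrix Fin.succ Fin.castSucc =
        Matrix.of (fun k j => (z L - z (Fin.castSucc j)) * jmat n (z ∘ Fin.castSucc) k j) := by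
      ext k j
      have hcl : Fin.castSucc j ≠ L := (Fin.castSucc_lt_last j).ne
      rw [Matrix.submatrix_apply, hFa, if_neg hcl]
      exact key k j
    have hdet3 : (F.submatrix Fin.succ Fin.castSucc).det =
        (∏ j : Fin n, (z L - z (Fin.castSucc j))) * (jmat n (z ∘ Fin.castSucc)).det := by
      rw [hsub, Matrix.det_mul_row]
    have hneg : (∏ j : Fin n, (z L - z (Fin.castSucc j))) =
        (-1 : ℂ)^n * ∏ j : Fin n, (z (Fin.castSucc j) - z L) := by
      rw [show (∏ j : Fin n, (z L - z (Fin.castSucc j))) =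
          ∏ j : Fin n, (-1) * (z (Fin.castSucc j) - z L) from
        Finset.prod_congr rfl fun j _ => by ring]
      rw [Finset.prod_mul_distrib, Finset.prod_const, Finset.card_univ, Fintype.card_fin]
    -- assemble
    rw [hdet1, hdet2, hdet3, hneg, h (z ∘ Fin.castSucc)]
    rw [prod_pairs (n+1) (fun a b => z a - z b), prod_pairs_succ n (fun a b => z a - z b),
      ← prod_pairs n (fun a b => z (Fin.castSucc a) - z (Fin.castSucc b))]
    have hone : (-1 : ℂ)^n * (-1)^n = 1 := by
      rw [← mul_pow]
      norm_num
    calc (-1 : ℂ)^n * ((-1)^n * (∏ j : Fin n, (z (Fin.castSucc j) - z L)) *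
          (ε * ∏ p ∈ Finset.univ.filter (fun p : Fin n × Fin n => p.1 < p.2),
            ((z ∘ Fin.castSucc) p.1 - (z ∘ Fin.castSucc) p.2)))
        = ((-1 : ℂ)^n * (-1)^n) * ((∏ j : Fin n, (z (Fin.castSucc j) - z L)) *
          (ε * ∏ p ∈ Finset.univ.filter (fun p : Fin n × Fin n => p.1 < p.2),
            ((z ∘ Fin.castSucc) p.1 - (z ∘ Fin.castSucc) p.2))) := by ring
      _ = ε * ((∏ i : Fin n, (z (Fin.castSucc i) - z L)) *
          ∏ p ∈ Finset.univ.filter (fun p : Fin n × Fin n => p.1 < p.2),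
            (z (Fin.castSucc p.1) - z (Fin.castSucc p.2))) := by
          rw [hone, one_mul]
          simp only [Function.comp_apply]
          ring

lemma card_pairs (n : ℕ) :
    (Finset.univ.filter fun p : Fin n × Fin n => p.1 < p.2).card = n * (n - 1) / 2 := by
  set A := Finset.univ.filter fun p : Fin n × Fin n => p.1 < p.2 with hA
  set B := Finset.univ.filter fun p : Fin n × Fin n => p.2 < p.1 with hB
  have hAB : A.card = B.card := by
    refine Finset.card_nbij (fun p => (p.2, p.1)) ?_ ?_ ?_
    · intro p hp
      simp only [hA, Finset.mem_filter, Finset.mem_coe] at hp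
      simp [hB, hp.2]
    · intro p hp q hq hpq
      exact Prod.ext (congrArg Prod.snd hpq) (congrArg Prod.fst hpq)
    · intro p hp
      simp only [hB, Finset.coe_filter, Set.mem_setOf_eq] at hp
      exact ⟨(p.2, p.1), by simp [hA, hp.2], rfl⟩
  have htotal : A.card + (Finset.univ.filter fun p : Fin n × Fin n => ¬ p.1 < p.2).card
      = n * n := by
    rw [Finset.card_filter_add_card_filter_not, Finset.card_univ, Fintype.card_prod,
      Fintype.card_fin]
  have hsplit : (Finset.univ.filter fun p : Fin n × Fin n => ¬ p.1 < p.2)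
      = B ∪ (Finset.univ.filter fun p : Fin n × Fin n => p.1 = p.2) := by
    ext p
    simp only [hB, Finset.mem_filter, Finset.mem_univ, true_and, Finset.mem_union, not_lt]
    rw [le_iff_lt_or_eq]
    constructor
    · rintro (h | h)
      · exact Or.inl h
      · exact Or.inr h.symm
    · rintro (h | h)
      · exact Or.inl h
      · exact Or.inr h.symm
  have hdisj : Disjoint B (Finset.univ.filter fun p : Fin n × Fin n => p.1 = p.2) := by
    rw [Finset.disjoint_left]
    intro p hp hp'
    simp only [hB, Finset.mem_filter] at hp hp'
    exact absurd (hp'.2 ▸ hp.2) (lt_irrefl _)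
  have hdiag : (Finset.univ.filter fun p : Fin n × Fin n => p.1 = p.2).card = n := by
    have : (Finset.univ.filter fun p : Fin n × Fin n => p.1 = p.2)
        = Finset.univ.image (fun i : Fin n => (i, i)) := by
      ext p
      simp only [Finset.mem_filter, Finset.mem_univ, true_and, Finset.mem_image]
      constructor
      · intro h
        exact ⟨p.1, by rw [Prod.ext_iff]; exact ⟨rfl, h⟩⟩
      · rintro ⟨i, -, rfl⟩
        rfl
    rw [this, Finset.card_image_of_injective _ (fun a b hab => (Prod.ext_iff.1 hab).1),
      Finset.card_univ, Fintype.card_fin]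
  rw [hsplit, Finset.card_union_of_disjoint hdisj, hdiag, ← hAB] at htotal
  have hnn : n * n = n * (n - 1) + n := by
    cases n with
    | zero => rfl
    | succ m => simp [Nat.succ_sub_one]; ring
  rw [hnn] at htotal
  omega

/-- The Jacobian determinant of `π_n` equals `±` the Vandermonde determinant
`∏_{j<k} (z_j - z_k)`; in particular it is homogeneous of degree `n(n-1)/2`. -/
theorem stmt18 (n : ℕ) :
    (∃ ε : ℂ, (ε = 1 ∨ ε = -1) ∧ ∀ z : Fin n → ℂ,
      (fderiv ℂ (symMap n) z).det =
        ε * ∏ p ∈ Finset.univ.filter (fun p : Fin n × Fin n => p.1 < p.2), (z p.1 - z p.2)) ∧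
    (∀ (c : ℂ) (z : Fin n → ℂ),
      (fderiv ℂ (symMap n) (c • z)).det = c ^ (n * (n - 1) / 2) * (fderiv ℂ (symMap n) z).det) := by
  obtain ⟨ε, hε, h⟩ := det_jmat n
  constructor
  · exact ⟨ε, hε, fun z => by rw [det_fderiv, h]⟩
  · intro c z
    rw [det_fderiv, det_fderiv, h, h]
    have hsm : ∀ p : Fin n × Fin n, (c • z) p.1 - (c • z) p.2 = c * (z p.1 - z p.2) := by
      intro p
      simp only [Pi.smul_apply, smul_eq_mul]
      ring
    rw [Finset.prod_congr rfl (fun p _ => hsm p), Finset.prod_mul_distrib,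
      Finset.prod_const, card_pairs]
    ring
end
end
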